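/- arXiv:2111.01219 — 9 statements merged into one kernel-verified Lean document; each statement's English description precedes it below -/
import Mathlib

section
/- Let f: R^n_{≥0} → R^n_{≥0} be order-preserving and homogeneous. For every strictly positive x, the lower Collatz-Wielandt number λ(f) equals the limit as k → ∞ of (min_i f^k(x)_i)^{1/k}. -/
open Filter Real

private lemma cw_iter_nonneg {n : ℕ} {f : (Fin n → ℝ) → (Fin n → ℝ)}
    (hf_nonneg : ∀ x, (∀ i, 0 ≤ x i) → ∀ i, 0 ≤ f x i) :
    ∀ (k : ℕ) (x : Fin n → ℝ), (∀ i, 0 ≤ x i) → ∀ i, 0 ≤ f^[k] x i := by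
  intro k
  induction k with
  | zero => intro x hx i; simpa using hx i
  | succ k ih =>
      intro x hx i
      rw [Function.iterate_succ_apply']
      exact hf_nonneg _ (ih x hx) i

private lemma cw_iter_mono {n : ℕ} {f : (Fin n → ℝ) → (Fin n → ℝ)}
    (hf_nonneg : ∀ x, (∀ i, 0 ≤ x i) → ∀ i, 0 ≤ f x i)
    (hf_mono : ∀ x y, (∀ i, 0 ≤ x i) → (∀ i, 0 ≤ y i) → (∀ i, x i ≤ y i) →
      ∀ i, f x i ≤ f y i) :
    ∀ (k : ℕ) (x y : Fin n → ℝ), (∀ i, 0 ≤ x i) → (∀ i, 0 ≤ y i) →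
      (∀ i, x i ≤ y i) → ∀ i, f^[k] x i ≤ f^[k] y i := by
  intro k
  induction k with
  | zero => intro x y _ _ h i; simpa using h i
  | succ k ih =>
      intro x y hx hy h i
      rw [Function.iterate_succ_apply', Function.iterate_succ_apply']
      exact hf_mono _ _ (cw_iter_nonneg hf_nonneg k x hx) (cw_iter_nonneg hf_nonneg k y hy)
        (ih x y hx hy h) i

private lemma cw_iter_hom {n : ℕ} {f : (Fin n → ℝ) → (Fin n → ℝ)}
    (hf_nonneg : ∀ x, (∀ i, 0 ≤ x i) → ∀ i, 0 ≤ f x i)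
    (hf_hom : ∀ (t : ℝ), 0 < t → ∀ x, (∀ i, 0 ≤ x i) → f (t • x) = t • f x) :
    ∀ (k : ℕ) (t : ℝ), 0 < t → ∀ x, (∀ i, 0 ≤ x i) →
      f^[k] (t • x) = t • f^[k] x := by
  intro k
  induction k with
  | zero => intro t _ x _; simp
  | succ k ih =>
      intro t ht x hx
      rw [Function.iterate_succ_apply', Function.iterate_succ_apply', ih t ht x hx,
        hf_hom t ht _ (cw_iter_nonneg hf_nonneg k x hx)]

private lemma cw_pos_iInf {n : ℕ} (hn : 0 < n) (g : Fin n → ℝ) (hg : ∀ i, 0 < g i) :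
    0 < ⨅ i, g i := by
  haveI : Nonempty (Fin n) := ⟨⟨0, hn⟩⟩
  obtain ⟨i0, hi0⟩ := Finite.exists_min g
  exact lt_of_lt_of_le (hg i0) (le_ciInf hi0)

private lemma cw_tendsto_rpow_one_div {β : ℝ} (hβ : 0 < β) :
    Tendsto (fun k : ℕ => β ^ ((1 : ℝ) / k)) atTop (nhds 1) := by
  have h1 : Tendsto (fun k : ℕ => Real.log β * ((1 : ℝ) / k)) atTop (nhds 0) := by
    have := tendsto_one_div_atTop_nhds_zero_nat.const_mul (Real.log β)
    simpa using this
  have h2 : Tendsto (fun k : ℕ => Real.exp (Real.log β * ((1 : ℝ) / k))) atTop (nhds 1) := by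
    have := (Real.continuous_exp.tendsto 0).comp h1
    simpa [Function.comp_def] using this
  refine h2.congr fun k => ?_
  rw [Real.rpow_def_of_pos hβ]

/-- For an order-preserving homogeneous map `f` of the nonnegative orthant, the lower
Collatz-Wielandt number `λ(f) = sup_{x ≫ 0} min_i f(x)_i/x_i` equals
`lim_{k→∞} (min_i f^k(x)_i)^{1/k}` for every strictly positive `x`. -/
theorem lower_collatzWielandt_iterates (n : ℕ) (hn : 0 < n)
    (f : (Fin n → ℝ) → (Fin n → ℝ))
    (hf_nonneg : ∀ x, (∀ i, 0 ≤ x i) → ∀ i, 0 ≤ f x i)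
    (hf_mono : ∀ x y, (∀ i, 0 ≤ x i) → (∀ i, 0 ≤ y i) → (∀ i, x i ≤ y i) →
      ∀ i, f x i ≤ f y i)
    (hf_hom : ∀ (t : ℝ), 0 < t → ∀ x, (∀ i, 0 ≤ x i) → f (t • x) = t • f x)
    (x : Fin n → ℝ) (hx : ∀ i, 0 < x i) :
    Filter.Tendsto (fun k : ℕ => (⨅ i, f^[k] x i) ^ ((1 : ℝ) / k))
      Filter.atTop
      (nhds (⨆ y : {y : Fin n → ℝ // ∀ i, 0 < y i}, ⨅ i, f y.1 i / y.1 i)) := by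
  haveI : Nonempty (Fin n) := ⟨⟨0, hn⟩⟩
  haveI : Nonempty {y : Fin n → ℝ // ∀ i, 0 < y i} := ⟨⟨x, hx⟩⟩
  set u : ℕ → ℝ := fun k : ℕ => (⨅ i, f^[k] x i) ^ ((1 : ℝ) / k) with hu_def
  set lam : ℝ := ⨆ y : {y : Fin n → ℝ // ∀ i, 0 < y i}, ⨅ i, f y.1 i / y.1 i with hlam_def
  have hx0 : ∀ i, 0 ≤ x i := fun i => (hx i).le
  -- basic nonnegativity of iterates at x
  have hiter : ∀ k i, 0 ≤ f^[k] x i := fun k i => cw_iter_nonneg hf_nonneg k x hx0 i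
  have hm_nonneg : ∀ k : ℕ, 0 ≤ ⨅ i, f^[k] x i := fun k => le_ciInf fun i => hiter k i
  have hu_nonneg : ∀ k, 0 ≤ u k := fun k => Real.rpow_nonneg (hm_nonneg k) _
  -- bounds on x
  set M : ℝ := ⨆ i, x i with hM_def
  set mx : ℝ := ⨅ i, x i with hmx_def
  have hmx : 0 < mx := cw_pos_iInf hn x hx
  have hxM : ∀ i, x i ≤ M := fun i => le_ciSup (Finite.bddAbove_range x) i
  have hM : 0 < M := lt_of_lt_of_le (hx ⟨0, hn⟩) (hxM ⟨0, hn⟩)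
  -- the Collatz-Wielandt collection is bounded above
  have hBdd : BddAbove (Set.range fun y : {y : Fin n → ℝ // ∀ i, 0 < y i} =>
      ⨅ i, f y.1 i / y.1 i) := by
    refine ⟨(⨆ i, f x i) / mx, ?_⟩
    rintro _ ⟨⟨y, hy⟩, rfl⟩
    obtain ⟨i0, hi0⟩ := Finite.exists_max y
    have hy0 : ∀ i, 0 ≤ y i := fun i => (hy i).le
    have hc : 0 < y i0 / mx := div_pos (hy i0) hmx
    have hyx : ∀ i, y i ≤ (y i0 / mx) * x i := fun i =>
      calc y i ≤ y i0 := hi0 i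
        _ = (y i0 / mx) * mx := (div_mul_cancel₀ _ hmx.ne').symm
        _ ≤ (y i0 / mx) * x i :=
          mul_le_mul_of_nonneg_left (ciInf_le (Finite.bddBelow_range x) i) hc.le
    have hfy : ∀ i, f y i ≤ (y i0 / mx) * f x i := by
      intro i
      have h1 : f y i ≤ f ((y i0 / mx) • x) i := by
        refine hf_mono _ _ hy0 (fun j => by
          have h1 := hy i0
          have h2 := hx j
          simp only [Pi.smul_apply, smul_eq_mul]
          positivity) (fun j => ?_) i
        simpa [Pi.smul_apply, smul_eq_mul] using hyx j
      rw [hf_hom _ hc x hx0] at h1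
      simpa [Pi.smul_apply, smul_eq_mul] using h1
    have hstep2 : f y i0 / y i0 ≤ (⨆ i, f x i) / mx := by
      rw [div_le_div_iff₀ (hy i0) hmx]
      have h1 := hfy i0
      have h2 : f x i0 ≤ ⨆ i, f x i := le_ciSup (Finite.bddAbove_range _) i0
      calc f y i0 * mx ≤ ((y i0 / mx) * f x i0) * mx :=
            mul_le_mul_of_nonneg_right h1 hmx.le
        _ = y i0 * f x i0 := by rw [div_mul_eq_mul_div, div_mul_cancel₀ _ hmx.ne']
        _ ≤ y i0 * (⨆ i, f x i) := mul_le_mul_of_nonneg_left h2 (hy i0).le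
        _ = (⨆ i, f x i) * y i0 := mul_comm _ _
    exact (ciInf_le (Finite.bddBelow_range _) i0).trans hstep2
  have hlam0 : 0 ≤ lam := by
    have h1 : (0:ℝ) ≤ ⨅ i, f x i / x i :=
      le_ciInf fun i => div_nonneg (hf_nonneg x hx0 i) (hx0 i)
    exact h1.trans (le_ciSup hBdd ⟨x, hx⟩)
  -- the upper bound : u k ≤ M^(1/k) * lam for k ≥ 1
  have hub : ∀ k : ℕ, 1 ≤ k → u k ≤ M ^ ((1:ℝ)/k) * lam := by
    intro k hk
    have hk0 : (k : ℝ) ≠ 0 := Nat.cast_ne_zero.2 (by omega)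
    set m : ℝ := ⨅ i, f^[k] x i with hm_def
    rcases eq_or_lt_of_le (hm_nonneg k) with hm | hm
    · have hm0 : m = 0 := hm.symm
      have : u k = 0 := by
        simp only [hu_def, ← hm_def, hm0]
        exact Real.zero_rpow (one_div_ne_zero hk0)
      rw [this]
      positivity
    · -- main case: m > 0
      set t : ℝ := (m / M) ^ ((1:ℝ)/k) with ht_def
      have ht : 0 < t := Real.rpow_pos_of_pos (div_pos hm hM) _
      have htk : t ^ k = m / M := by
        rw [ht_def, one_div, Real.rpow_inv_natCast_pow (div_pos hm hM).le (by omega)]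
      have hrange : (Finset.range k).Nonempty := ⟨0, Finset.mem_range.2 (by omega)⟩
      set y : Fin n → ℝ := fun i => (Finset.range k).sup' hrange
        (fun j => f^[j] x i / t ^ j) with hy_def
      have hy_ge : ∀ j, j < k → ∀ i, f^[j] x i / t ^ j ≤ y i := fun j hj i =>
        Finset.le_sup' (b := j) (fun j => f^[j] x i / t ^ j) (Finset.mem_range.2 hj)
      have hy_pos : ∀ i, 0 < y i := by
        intro i
        have := hy_ge 0 (by omega) i
        simp only [Function.iterate_zero_apply, pow_zero, div_one] at this
        exact lt_of_lt_of_le (hx i) this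
      have hy0 : ∀ i, 0 ≤ y i := fun i => (hy_pos i).le
      -- f y dominates shifted terms
      have hstep : ∀ j, j < k → ∀ i, f^[j+1] x i / t ^ j ≤ f y i := by
        intro j hj i
        have htj : 0 < (t ^ j)⁻¹ := by positivity
        have h1 : ∀ i', ((t ^ j)⁻¹ • f^[j] x) i' ≤ y i' := by
          intro i'
          simpa [Pi.smul_apply, smul_eq_mul, div_eq_inv_mul] using hy_ge j hj i'
        have h2 : f ((t ^ j)⁻¹ • f^[j] x) i ≤ f y i :=
          hf_mono _ _ (fun i' => by
              have := hiter j i'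
              simp only [Pi.smul_apply, smul_eq_mul]
              positivity) hy0 h1 i
        rw [hf_hom _ htj _ (fun i' => hiter j i')] at h2
        have h3 : f (f^[j] x) = f^[j+1] x := (Function.iterate_succ_apply' f j x).symm
        rw [h3] at h2
        simpa [Pi.smul_apply, smul_eq_mul, div_eq_inv_mul] using h2
      -- f y i ≥ t * x i  (via the k-th iterate)
      have hbase : ∀ i, t * x i ≤ f y i := by
        intro i
        have h1 : f^[k] x i / t ^ (k-1) ≤ f y i := by
          have := hstep (k-1) (by omega) i
          rwa [Nat.sub_add_cancel hk] at this
        have h2 : m ≤ f^[k] x i := ciInf_le (Finite.bddBelow_range _) i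
        have hkk : t ^ k = t ^ (k-1) * t := by
          rw [← pow_succ, Nat.sub_add_cancel hk]
        have h4 : t * M ≤ f^[k] x i / t ^ (k-1) := by
          rw [le_div_iff₀ (pow_pos ht (k-1))]
          calc t * M * t ^ (k-1) = t ^ k * M := by rw [hkk]; ring
            _ = m := by rw [htk, div_mul_cancel₀ _ hM.ne']
            _ ≤ f^[k] x i := h2
        exact (mul_le_mul_of_nonneg_left (hxM i) ht.le).trans (h4.trans h1)
      -- f y i ≥ t * y i
      have hty : ∀ i, t * y i ≤ f y i := by
        intro i
        have : y i ≤ f y i / t := by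
          refine Finset.sup'_le hrange _ fun j hj => ?_
          rw [Finset.mem_range] at hj
          rw [div_le_div_iff₀ (by positivity) ht]
          cases j with
          | zero =>
              simp only [Function.iterate_zero_apply, pow_zero]
              have := hbase i
              nlinarith [hx i, ht]
          | succ jj =>
              have h1 := hstep jj (by omega) i
              have h2 : 0 < t ^ jj := pow_pos ht _
              calc f^[jj+1] x i * t = (f^[jj+1] x i / t ^ jj) * t ^ (jj+1) := by
                    rw [pow_succ]; field_simp
                _ ≤ f y i * t ^ (jj+1) :=
                    mul_le_mul_of_nonneg_right h1 (by positivity)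
        calc t * y i ≤ t * (f y i / t) := mul_le_mul_of_nonneg_left this ht.le
          _ = f y i := by field_simp
      -- hence t ≤ lam
      have htlam : t ≤ lam := by
        have h1 : t ≤ ⨅ i, f y i / y i :=
          le_ciInf fun i => (le_div_iff₀ (hy_pos i)).2 (by
            have := hty i; linarith [mul_comm t (y i)])
        exact h1.trans (le_ciSup hBdd ⟨y, hy_pos⟩)
      -- conclude
      have hfin : u k = M ^ ((1:ℝ)/k) * t := by
        have h1 : M * (m / M) = m := by field_simp
        rw [hu_def]
        simp only [← hm_def]
        rw [← h1, Real.mul_rpow hM.le (div_pos hm hM).le]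
      rw [hfin]
      exact mul_le_mul_of_nonneg_left htlam (Real.rpow_nonneg hM.le _)
  -- tendsto of the upper bounding sequence
  have tub : Tendsto (fun k : ℕ => M ^ ((1:ℝ)/k) * lam) atTop (nhds lam) := by
    have := (cw_tendsto_rpow_one_div hM).mul_const lam
    simpa using this
  -- boundedness facts
  have h_below : IsBoundedUnder (· ≥ ·) atTop u :=
    Filter.isBoundedUnder_of ⟨0, fun k => hu_nonneg k⟩
  have h_above : IsBoundedUnder (· ≤ ·) atTop u := by
    obtain ⟨b, hb⟩ := tub.isBoundedUnder_le
    rw [Filter.eventually_map] at hb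
    refine ⟨b, ?_⟩
    rw [Filter.eventually_map]
    filter_upwards [hb, Filter.eventually_ge_atTop 1] with k hk1 hk2
    exact (hub k hk2).trans hk1
  -- limsup bound
  have hlimsup : limsup u atTop ≤ lam := by
    have h1 : u ≤ᶠ[atTop] fun k : ℕ => M ^ ((1:ℝ)/k) * lam := by
      filter_upwards [Filter.eventually_ge_atTop 1] with k hk
      exact hub k hk
    calc limsup u atTop ≤ limsup (fun k : ℕ => M ^ ((1:ℝ)/k) * lam) atTop :=
          limsup_le_limsup h1 (h_below.isCoboundedUnder_le) tub.isBoundedUnder_le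
      _ = lam := tub.limsup_eq
  -- liminf bound
  have hliminf : lam ≤ liminf u atTop := by
    rw [hlam_def]
    refine ciSup_le fun yy => ?_
    obtain ⟨y, hy⟩ := yy
    set c : ℝ := ⨅ i, f y i / y i with hc_def
    have hy0 : ∀ i, 0 ≤ y i := fun i => (hy i).le
    have hc0 : 0 ≤ c := le_ciInf fun i => div_nonneg (hf_nonneg y hy0 i) (hy0 i)
    show c ≤ liminf u atTop
    rcases eq_or_lt_of_le hc0 with hc | hc
    · rw [← hc]
      exact le_liminf_of_le h_above.isCoboundedUnder_ge
        (Filter.Eventually.of_forall fun k => hu_nonneg k)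
    · -- c > 0 case
      have hfyc : ∀ i, c * y i ≤ f y i := by
        intro i
        have h1 : c ≤ f y i / y i := ciInf_le (Finite.bddBelow_range _) i
        rw [le_div_iff₀ (hy i)] at h1
        linarith [mul_comm c (y i)]
      -- f^[k] y ≥ c^k y
      have hiter_y : ∀ k i, c ^ k * y i ≤ f^[k] y i := by
        intro k
        induction k with
        | zero => intro i; simp
        | succ k ih =>
            intro i
            rw [Function.iterate_succ_apply']
            have h1 : ∀ i', (c ^ k • y) i' ≤ f^[k] y i' := by
              intro i'
              simpa [Pi.smul_apply, smul_eq_mul] using ih i'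
            have h2 : f (c ^ k • y) i ≤ f (f^[k] y) i :=
              hf_mono _ _ (fun i' => by
                  have := hy0 i'
                  simp only [Pi.smul_apply, smul_eq_mul]
                  positivity)
                (cw_iter_nonneg hf_nonneg k y hy0) h1 i
            rw [hf_hom _ (by positivity) y hy0] at h2
            have h3 : c ^ (k+1) * y i = c ^ k * (c * y i) := by ring
            rw [h3]
            calc c ^ k * (c * y i) ≤ c ^ k * f y i :=
                  mul_le_mul_of_nonneg_left (hfyc i) (by positivity)
              _ = (c ^ k • f y) i := by simp [Pi.smul_apply, smul_eq_mul]
              _ ≤ f (f^[k] y) i := h2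
      -- x ≥ α • y
      set α : ℝ := ⨅ i, x i / y i with hα_def
      have hα : 0 < α := cw_pos_iInf hn _ (fun i => div_pos (hx i) (hy i))
      have hxy : ∀ i, α * y i ≤ x i := by
        intro i
        have h1 : α ≤ x i / y i := ciInf_le (Finite.bddBelow_range _) i
        rw [le_div_iff₀ (hy i)] at h1
        linarith [mul_comm α (y i)]
      set my : ℝ := ⨅ i, y i with hmy_def
      have hmy : 0 < my := cw_pos_iInf hn y hy
      set β : ℝ := α * my with hβ_def
      have hβ : 0 < β := by positivity
      -- key : β * c^k ≤ m_k
      have hkey : ∀ k : ℕ, β * c ^ k ≤ ⨅ i, f^[k] x i := by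
        intro k
        refine le_ciInf fun i => ?_
        have h1 : ∀ i', (α • y) i' ≤ x i' := by
          intro i'
          simpa [Pi.smul_apply, smul_eq_mul] using hxy i'
        have h2 : f^[k] (α • y) i ≤ f^[k] x i :=
          cw_iter_mono hf_nonneg hf_mono k _ _
            (fun i' => by
              have := hy0 i'
              simp only [Pi.smul_apply, smul_eq_mul]
              positivity) hx0 h1 i
        rw [cw_iter_hom hf_nonneg hf_hom k α hα y hy0] at h2
        have h3 : my ≤ y i := ciInf_le (Finite.bddBelow_range _) i
        calc β * c ^ k = α * (c ^ k * my) := by rw [hβ_def]; ring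
          _ ≤ α * (c ^ k * y i) :=
              mul_le_mul_of_nonneg_left (mul_le_mul_of_nonneg_left h3 (by positivity)) hα.le
          _ ≤ α * f^[k] y i :=
              mul_le_mul_of_nonneg_left (hiter_y k i) hα.le
          _ = (α • f^[k] y) i := by simp [Pi.smul_apply, smul_eq_mul]
          _ ≤ f^[k] x i := h2
      -- lower bound on u k for k ≥ 1
      have hlb : ∀ k : ℕ, 1 ≤ k → β ^ ((1:ℝ)/k) * c ≤ u k := by
        intro k hk
        have hk0 : (k:ℝ) ≠ 0 := Nat.cast_ne_zero.2 (by omega)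
        have h1 : (β * c ^ k) ^ ((1:ℝ)/k) ≤ u k :=
          Real.rpow_le_rpow (by positivity) (hkey k) (by positivity)
        have h2 : (β * c ^ k) ^ ((1:ℝ)/k) = β ^ ((1:ℝ)/k) * c := by
          rw [Real.mul_rpow hβ.le (by positivity), one_div,
            Real.pow_rpow_inv_natCast hc.le (by omega)]
        rwa [h2] at h1
      have tlb : Tendsto (fun k : ℕ => β ^ ((1:ℝ)/k) * c) atTop (nhds c) := by
        have := (cw_tendsto_rpow_one_div hβ).mul_const c
        simpa using this
      calc c = liminf (fun k : ℕ => β ^ ((1:ℝ)/k) * c) atTop := tlb.liminf_eq.symm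
        _ ≤ liminf u atTop := by
            refine liminf_le_liminf ?_ tlb.isBoundedUnder_ge h_above.isCoboundedUnder_ge
            filter_upwards [Filter.eventually_ge_atTop 1] with k hk
            exact hlb k hk
  exact tendsto_of_le_liminf_of_limsup_le hliminf hlimsup h_above h_below
end

section
/- Let f: R^n_{>0} → R^n_{>0} be order-preserving and homogeneous. The minimum displacement of f in Hilbert's projective metric equals log r(f) − log λ(f), i.e., inf over strictly positive x of d_H(x, f(x)) = log r(f) − log λ(f). -/
/-- Knaster–Tarski style fixed point on an order interval of `Fin n → ℝ`. -/
private lemma ktfix {n : ℕ} (Θ : (Fin n → ℝ) → (Fin n → ℝ)) (v u : Fin n → ℝ)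
    (hvu : v ≤ u)
    (hmono : ∀ x y, v ≤ x → x ≤ y → y ≤ u → Θ x ≤ Θ y)
    (hv : v ≤ Θ v) (hu : Θ u ≤ u) :
    ∃ x, v ≤ x ∧ x ≤ u ∧ Θ x = x := by
  classical
  set S : Set (Fin n → ℝ) := {x | v ≤ x ∧ x ≤ u ∧ x ≤ Θ x} with hS
  have hvS : v ∈ S := ⟨le_rfl, hvu, hv⟩
  set x₀ : Fin n → ℝ := fun i => sSup ((fun x : Fin n → ℝ => x i) '' S) with hx₀
  have hbdd : ∀ i, BddAbove ((fun x : Fin n → ℝ => x i) '' S) := fun i =>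
    ⟨u i, by rintro t ⟨x, hx, rfl⟩; exact hx.2.1 i⟩
  have hne : ∀ i, ((fun x : Fin n → ℝ => x i) '' S).Nonempty := fun i => ⟨v i, v, hvS, rfl⟩
  have hmem_le : ∀ x ∈ S, x ≤ x₀ := fun x hx i => le_csSup (hbdd i) ⟨x, hx, rfl⟩
  have hub : ∀ y : Fin n → ℝ, (∀ x ∈ S, x ≤ y) → x₀ ≤ y := fun y hy i =>
    csSup_le (hne i) (by rintro t ⟨x, hx, rfl⟩; exact hy x hx i)
  have hvx₀ : v ≤ x₀ := hmem_le v hvS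
  have hx₀u : x₀ ≤ u := hub u fun x hx => hx.2.1
  have hx₀Θ : x₀ ≤ Θ x₀ :=
    hub _ (fun x hx => le_trans hx.2.2 (hmono x x₀ hx.1 (hmem_le x hx) hx₀u))
  have hΘu' : Θ x₀ ≤ u := le_trans (hmono x₀ u hvx₀ hx₀u le_rfl) hu
  have hΘS : Θ x₀ ∈ S := ⟨le_trans hv (hmono v x₀ le_rfl hvx₀ hx₀u), hΘu',
    hmono x₀ (Θ x₀) hvx₀ hx₀Θ hΘu'⟩
  exact ⟨x₀, hvx₀, hx₀u, le_antisymm (hmem_le _ hΘS) hx₀Θ⟩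

/-- The minimum displacement of an order-preserving homogeneous map `f` of the strictly
positive orthant, in Hilbert's projective metric, equals `log r(f) − log λ(f)` where
`r(f)` and `λ(f)` are the upper and lower Collatz-Wielandt numbers. -/
theorem minimum_displacement_eq_log_r_sub_log_lambda (n : ℕ) (hn : 0 < n)
    (f : (Fin n → ℝ) → (Fin n → ℝ))
    (hf_pos : ∀ x, (∀ i, 0 < x i) → ∀ i, 0 < f x i)
    (hf_mono : ∀ x y, (∀ i, 0 < x i) → (∀ i, 0 < y i) → (∀ i, x i ≤ y i) →
      ∀ i, f x i ≤ f y i)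
    (hf_hom : ∀ (t : ℝ), 0 < t → ∀ x, (∀ i, 0 < x i) → f (t • x) = t • f x) :
    (⨅ x : {x : Fin n → ℝ // ∀ i, 0 < x i},
        (Real.log (⨆ i, x.1 i / f x.1 i) - Real.log (⨅ i, x.1 i / f x.1 i)))
      = Real.log (⨅ x : {x : Fin n → ℝ // ∀ i, 0 < x i}, ⨆ i, f x.1 i / x.1 i)
        - Real.log (⨆ x : {x : Fin n → ℝ // ∀ i, 0 < x i}, ⨅ i, f x.1 i / x.1 i) := by
  classical
  haveI : Nonempty (Fin n) := ⟨⟨0, hn⟩⟩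
  haveI hSubNe : Nonempty {x : Fin n → ℝ // ∀ i, 0 < x i} :=
    ⟨⟨fun _ => 1, fun _ => one_pos⟩⟩
  set Sub := {x : Fin n → ℝ // ∀ i, 0 < x i} with hSubdef
  set M : Sub → ℝ := fun x => ⨆ i, f x.1 i / x.1 i with hMdef
  set m : Sub → ℝ := fun x => ⨅ i, f x.1 i / x.1 i with hmdef
  -- basic facts
  have hfx_pos : ∀ x : Sub, ∀ i, 0 < f x.1 i := fun x => hf_pos x.1 x.2
  have hdiv_pos : ∀ x : Sub, ∀ i, 0 < f x.1 i / x.1 i :=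
    fun x i => div_pos (hfx_pos x i) (x.2 i)
  have hm_le_div : ∀ x : Sub, ∀ i, m x ≤ f x.1 i / x.1 i :=
    fun x i => ciInf_le (f := fun i => f x.1 i / x.1 i) ((Set.finite_range _).bddBelow) i
  have hdiv_le_M : ∀ x : Sub, ∀ i, f x.1 i / x.1 i ≤ M x :=
    fun x i => le_ciSup (f := fun i => f x.1 i / x.1 i) ((Set.finite_range _).bddAbove) i
  have hm_pos : ∀ x : Sub, 0 < m x := by
    intro x
    obtain ⟨i₀, hi₀⟩ := exists_eq_ciInf_of_finite (f := fun i => f x.1 i / x.1 i)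
    exact lt_of_lt_of_eq (hdiv_pos x i₀) hi₀
  have hM_pos : ∀ x : Sub, 0 < M x :=
    fun x => lt_of_lt_of_le (hm_pos x) (le_trans (hm_le_div x (Classical.arbitrary _))
      (hdiv_le_M x _))
  have hm_le_M : ∀ x : Sub, m x ≤ M x :=
    fun x => le_trans (hm_le_div x (Classical.arbitrary _)) (hdiv_le_M x _)
  -- comparison lemma : m y ≤ M x
  have hcomp : ∀ x y : Sub, m y ≤ M x := by
    intro x y
    obtain ⟨i₀, hi₀⟩ := exists_eq_ciSup_of_finite (f := fun i => y.1 i / x.1 i)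
    set α := ⨆ i, y.1 i / x.1 i with hα
    have hα_pos : 0 < α := by rw [← hi₀]; exact div_pos (y.2 i₀) (x.2 i₀)
    have hαx_pos : ∀ i, 0 < (α • x.1) i := by
      intro i; simp only [Pi.smul_apply, smul_eq_mul]; exact mul_pos hα_pos (x.2 i)
    have hy_le : ∀ i, y.1 i ≤ (α • x.1) i := by
      intro i
      have h1 : y.1 i / x.1 i ≤ α :=
        le_ciSup (f := fun i => y.1 i / x.1 i) ((Set.finite_range _).bddAbove) i
      simp only [Pi.smul_apply, smul_eq_mul]
      calc y.1 i = y.1 i / x.1 i * x.1 i := (div_mul_cancel₀ _ (x.2 i).ne').symm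
        _ ≤ α * x.1 i := mul_le_mul_of_nonneg_right h1 (x.2 i).le
    have h2 : ∀ i, f y.1 i ≤ f (α • x.1) i := hf_mono y.1 (α • x.1) y.2 hαx_pos hy_le
    have h3 : f (α • x.1) = α • f x.1 := hf_hom α hα_pos x.1 x.2
    have hyi₀ : y.1 i₀ = α * x.1 i₀ := by
      rw [← hi₀]; exact (div_mul_cancel₀ _ (x.2 i₀).ne').symm
    have h4 : m y * y.1 i₀ ≤ f y.1 i₀ := (le_div_iff₀ (y.2 i₀)).mp (hm_le_div y i₀)
    have h5 : f x.1 i₀ ≤ M x * x.1 i₀ := (div_le_iff₀ (x.2 i₀)).mp (hdiv_le_M x i₀)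
    have h6 : f y.1 i₀ ≤ α * (M x * x.1 i₀) := by
      calc f y.1 i₀ ≤ f (α • x.1) i₀ := h2 i₀
        _ = α * f x.1 i₀ := by rw [h3]; simp [smul_eq_mul]
        _ ≤ α * (M x * x.1 i₀) := mul_le_mul_of_nonneg_left h5 hα_pos.le
    have h8 : 0 < α * x.1 i₀ := mul_pos hα_pos (x.2 i₀)
    have h7 : m y * (α * x.1 i₀) ≤ M x * (α * x.1 i₀) := by
      have h4' : m y * (α * x.1 i₀) ≤ f y.1 i₀ := by rw [← hyi₀]; exact h4
      calc m y * (α * x.1 i₀) ≤ α * (M x * x.1 i₀) := h4'.trans h6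
        _ = M x * (α * x.1 i₀) := by ring
    exact le_of_mul_le_mul_right h7 h8
  -- r and λ
  set r : ℝ := ⨅ x : Sub, M x with hrdef
  set lam : ℝ := ⨆ x : Sub, m x with hlamdef
  have hbddM : BddBelow (Set.range M) := ⟨m (Classical.arbitrary _), by
    rintro t ⟨x, rfl⟩; exact hcomp x _⟩
  have hbddm : BddAbove (Set.range m) := ⟨M (Classical.arbitrary _), by
    rintro t ⟨y, rfl⟩; exact hcomp _ y⟩
  have hlam_le_r : lam ≤ r :=
    le_ciInf fun x => ciSup_le fun y => hcomp x y
  have hlam_pos : 0 < lam :=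
    lt_of_lt_of_le (hm_pos (Classical.arbitrary _)) (le_ciSup hbddm _)
  have hr_pos : 0 < r := lt_of_lt_of_le hlam_pos hlam_le_r
  -- rewrite the LHS integrand
  have hterm : ∀ x : Sub,
      Real.log (⨆ i, x.1 i / f x.1 i) - Real.log (⨅ i, x.1 i / f x.1 i)
        = Real.log (M x) - Real.log (m x) := by
    intro x
    have hinv : ∀ i, x.1 i / f x.1 i = (f x.1 i / x.1 i)⁻¹ := fun i => (inv_div _ _).symm
    have hsup : (⨆ i, x.1 i / f x.1 i) = (m x)⁻¹ := by
      apply le_antisymm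
      · apply ciSup_le
        intro i
        rw [hinv i]
        exact inv_anti₀ (hm_pos x) (hm_le_div x i)
      · obtain ⟨i₁, hi₁⟩ := exists_eq_ciInf_of_finite (f := fun i => f x.1 i / x.1 i)
        have heq : (m x)⁻¹ = x.1 i₁ / f x.1 i₁ := by
          show (⨅ i, f x.1 i / x.1 i)⁻¹ = _
          rw [← hi₁, inv_div]
        rw [heq]
        exact le_ciSup (f := fun i => x.1 i / f x.1 i) ((Set.finite_range _).bddAbove) i₁
    have hinf : (⨅ i, x.1 i / f x.1 i) = (M x)⁻¹ := by
      apply le_antisymm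
      · obtain ⟨i₂, hi₂⟩ := exists_eq_ciSup_of_finite (f := fun i => f x.1 i / x.1 i)
        have heq : (M x)⁻¹ = x.1 i₂ / f x.1 i₂ := by
          show (⨆ i, f x.1 i / x.1 i)⁻¹ = _
          rw [← hi₂, inv_div]
        rw [heq]
        exact ciInf_le (f := fun i => x.1 i / f x.1 i) ((Set.finite_range _).bddBelow) i₂
      · apply le_ciInf
        intro i
        rw [hinv i]
        exact inv_anti₀ (hdiv_pos x i) (hdiv_le_M x i)
    rw [hsup, hinf, Real.log_inv, Real.log_inv]
    ring
  rw [iInf_congr hterm]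
  have hdisp_nonneg : ∀ x : Sub, 0 ≤ Real.log (M x) - Real.log (m x) := by
    intro x
    have := Real.log_le_log (hm_pos x) (hm_le_M x)
    linarith
  have hbddD : BddBelow (Set.range fun x : Sub => Real.log (M x) - Real.log (m x)) :=
    ⟨0, by rintro t ⟨x, rfl⟩; exact hdisp_nonneg x⟩
  apply le_antisymm
  · -- hard direction: ⨅ ≤ log r - log lam
    apply le_of_forall_pos_le_add
    intro ε hε
    set b : ℝ := r * Real.exp (ε / 2) with hbdef
    set a : ℝ := lam * Real.exp (-(ε / 2)) with hadef
    have hexp1 : (1 : ℝ) < Real.exp (ε / 2) := by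
      rw [← Real.exp_zero]; exact Real.exp_lt_exp.mpr (by linarith)
    have hexp2 : Real.exp (-(ε / 2)) < 1 := by
      rw [← Real.exp_zero]; exact Real.exp_lt_exp.mpr (by linarith)
    have hb_gt : r < b := (lt_mul_iff_one_lt_right hr_pos).mpr hexp1
    have ha_lt : a < lam := (mul_lt_iff_lt_one_right hlam_pos).mpr hexp2
    have ha_pos : 0 < a := mul_pos hlam_pos (Real.exp_pos _)
    have hb_pos : 0 < b := lt_trans hr_pos hb_gt
    have hab : a ≤ b := le_of_lt (lt_of_lt_of_le ha_lt (le_trans hlam_le_r hb_gt.le))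
    obtain ⟨u, hu⟩ : ∃ u : Sub, M u < b := exists_lt_of_ciInf_lt hb_gt
    obtain ⟨v, hv⟩ : ∃ v : Sub, a < m v := exists_lt_of_lt_ciSup ha_lt
    -- scale v below u
    set t : ℝ := ⨅ i, u.1 i / v.1 i with htdef
    have ht_pos : 0 < t := by
      obtain ⟨i₃, hi₃⟩ := exists_eq_ciInf_of_finite (f := fun i => u.1 i / v.1 i)
      exact lt_of_lt_of_eq (div_pos (u.2 i₃) (v.2 i₃)) hi₃
    set w : Fin n → ℝ := t • v.1 with hwdef
    have hw_pos : ∀ i, 0 < w i := by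
      intro i
      simp only [hwdef, Pi.smul_apply, smul_eq_mul]
      exact mul_pos ht_pos (v.2 i)
    have hw_le_u : w ≤ u.1 := by
      intro i
      have h1 : t ≤ u.1 i / v.1 i :=
        ciInf_le (f := fun i => u.1 i / v.1 i) ((Set.finite_range _).bddBelow) i
      have h2 : t * v.1 i ≤ u.1 i := (le_div_iff₀ (v.2 i)).mp h1
      simpa [hwdef, Pi.smul_apply, smul_eq_mul] using h2
    have hfw : f w = t • f v.1 := hf_hom t ht_pos v.1 v.2
    have hfw_lower : ∀ i, a * w i ≤ f w i := by
      intro i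
      have hav : a * v.1 i ≤ f v.1 i := by
        have h1 : a ≤ f v.1 i / v.1 i := (hv.le).trans (hm_le_div v i)
        exact (le_div_iff₀ (v.2 i)).mp h1
      have h2 : f w i = t * f v.1 i := by
        rw [hfw]; simp [smul_eq_mul]
      have h3 : a * w i = t * (a * v.1 i) := by
        simp only [hwdef, Pi.smul_apply, smul_eq_mul]; ring
      rw [h2, h3]
      exact mul_le_mul_of_nonneg_left hav ht_pos.le
    -- the clamped map
    set Θ : (Fin n → ℝ) → (Fin n → ℝ) :=
      fun x i => min (max (x i) (f x i / b)) (f x i / a) with hΘdef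
    have hΘmono : ∀ x y, w ≤ x → x ≤ y → y ≤ u.1 → Θ x ≤ Θ y := by
      intro x y hwx hxy hyu
      have hx_pos : ∀ i, 0 < x i := fun i => (hw_pos i).trans_le (hwx i)
      have hy_pos : ∀ i, 0 < y i := fun i => (hx_pos i).trans_le (hxy i)
      have hf_le := hf_mono x y hx_pos hy_pos hxy
      intro i
      simp only [hΘdef]
      exact min_le_min
        (max_le_max (hxy i) (div_le_div_of_nonneg_right (hf_le i) hb_pos.le))
        (div_le_div_of_nonneg_right (hf_le i) ha_pos.le)
    have hΘw : w ≤ Θ w := by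
      intro i
      simp only [hΘdef]
      refine le_min (le_max_left _ _) ?_
      rw [le_div_iff₀ ha_pos, mul_comm]
      exact hfw_lower i
    have hΘu : Θ u.1 ≤ u.1 := by
      intro i
      simp only [hΘdef]
      have h5 : f u.1 i / b ≤ u.1 i := by
        have h6 : f u.1 i ≤ b * u.1 i := by
          have h7 : f u.1 i ≤ M u * u.1 i := (div_le_iff₀ (u.2 i)).mp (hdiv_le_M u i)
          nlinarith [u.2 i, hu, h7]
        rw [div_le_iff₀ hb_pos, mul_comm]
        exact h6
      exact (min_le_left _ _).trans (max_le le_rfl h5)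
    obtain ⟨z, hwz, hzu, hfix⟩ := ktfix Θ w u.1 hw_le_u hΘmono hΘw hΘu
    have hz_pos : ∀ i, 0 < z i := fun i => (hw_pos i).trans_le (hwz i)
    -- lower bound: a ≤ m z
    have hza : ∀ i, a * z i ≤ f z i := by
      intro i
      have h9 : z i ≤ f z i / a := by
        conv_lhs => rw [← congrFun hfix i]
        simp only [hΘdef]
        exact min_le_right _ _
      rw [le_div_iff₀ ha_pos] at h9
      linarith [h9]
    -- upper bound : M z ≤ b
    have hzb : ∀ i, f z i ≤ b * z i := by
      intro i
      by_contra hcon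
      push_neg at hcon
      have h6 : z i < f z i / b := by
        rw [lt_div_iff₀ hb_pos, mul_comm]
        exact hcon
      have h7 : max (z i) (f z i / b) = f z i / b := max_eq_right h6.le
      have h8 : f z i / b ≤ f z i / a := by
        apply div_le_div_of_nonneg_left (hf_pos z hz_pos i).le ha_pos hab
      have h10 : Θ z i = f z i / b := by
        simp only [hΘdef, h7]
        exact min_eq_left h8
      rw [congrFun hfix i] at h10
      linarith [h6, h10.le, h10.ge]
    have hz : Sub := ⟨z, hz_pos⟩
    have hmz : a ≤ m (⟨z, hz_pos⟩ : Sub) := by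
      apply le_ciInf
      intro i
      exact (le_div_iff₀ (hz_pos i)).mpr (hza i)
    have hMz : M (⟨z, hz_pos⟩ : Sub) ≤ b := by
      apply ciSup_le
      intro i
      exact (div_le_iff₀ (hz_pos i)).mpr (hzb i)
    have hstep : (⨅ x : Sub, (Real.log (M x) - Real.log (m x)))
        ≤ Real.log (M (⟨z, hz_pos⟩ : Sub)) - Real.log (m (⟨z, hz_pos⟩ : Sub)) :=
      ciInf_le hbddD _
    have hlogb : Real.log b = Real.log r + ε / 2 := by
      rw [hbdef, Real.log_mul hr_pos.ne' (Real.exp_pos _).ne', Real.log_exp]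
    have hloga : Real.log a = Real.log lam - ε / 2 := by
      rw [hadef, Real.log_mul hlam_pos.ne' (Real.exp_pos _).ne', Real.log_exp]
      ring
    have hfin : Real.log (M (⟨z, hz_pos⟩ : Sub)) - Real.log (m (⟨z, hz_pos⟩ : Sub))
        ≤ Real.log r - Real.log lam + ε := by
      have l1 : Real.log (M (⟨z, hz_pos⟩ : Sub)) ≤ Real.log b :=
        Real.log_le_log (hM_pos _) hMz
      have l2 : Real.log a ≤ Real.log (m (⟨z, hz_pos⟩ : Sub)) :=
        Real.log_le_log ha_pos hmz
      rw [hlogb] at l1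
      rw [hloga] at l2
      linarith
    exact hstep.trans hfin

  · -- easy direction
    apply le_ciInf
    intro x
    have h1 : Real.log r ≤ Real.log (M x) :=
      Real.log_le_log hr_pos (ciInf_le hbddM x)
    have h2 : Real.log (m x) ≤ Real.log lam :=
      Real.log_le_log (hm_pos x) (le_ciSup hbddm x)
    linarith
end

section
/- If an order-preserving homogeneous map f: R^n_{>0} → R^n_{>0} has an eigenvector x with all entries strictly positive (f(x) = μx with μ > 0), then the upper and lower Collatz-Wielandt numbers coincide: r(f) = λ(f) = μ. -/
/-- If an order-preserving homogeneous map `f` of the strictly positive orthant has a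
strictly positive eigenvector with eigenvalue `μ > 0`, then the upper and lower
Collatz-Wielandt numbers both equal `μ`. -/
theorem collatzWielandt_eq_of_positive_eigenvector (n : ℕ) (hn : 0 < n)
    (f : (Fin n → ℝ) → (Fin n → ℝ))
    (hf_pos : ∀ x, (∀ i, 0 < x i) → ∀ i, 0 < f x i)
    (hf_mono : ∀ x y, (∀ i, 0 < x i) → (∀ i, 0 < y i) → (∀ i, x i ≤ y i) →
      ∀ i, f x i ≤ f y i)
    (hf_hom : ∀ (t : ℝ), 0 < t → ∀ x, (∀ i, 0 < x i) → f (t • x) = t • f x)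
    (x : Fin n → ℝ) (hx : ∀ i, 0 < x i) (μ : ℝ) (hμ : 0 < μ) (hex : f x = μ • x) :
    (⨅ y : {y : Fin n → ℝ // ∀ i, 0 < y i}, ⨆ i, f y.1 i / y.1 i) = μ ∧
    (⨆ y : {y : Fin n → ℝ // ∀ i, 0 < y i}, ⨅ i, f y.1 i / y.1 i) = μ := by
  haveI : Nonempty (Fin n) := ⟨⟨0, hn⟩⟩
  haveI : Nonempty {y : Fin n → ℝ // ∀ i, 0 < y i} := ⟨⟨x, hx⟩⟩
  have hμx : ∀ i, f x i = μ * x i := fun i => by rw [hex]; rfl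
  -- key lemma 1: for any positive y, min ratio ≤ μ
  have key1 : ∀ y : Fin n → ℝ, (∀ i, 0 < y i) → (⨅ i, f y i / y i) ≤ μ := by
    intro y hy
    obtain ⟨i0, hi0⟩ := Finite.exists_max (fun i => y i / x i)
    set t := y i0 / x i0 with ht
    have htpos : 0 < t := div_pos (hy i0) (hx i0)
    have hle : ∀ j, y j ≤ t * x j := by
      intro j
      have h := hi0 j
      have : y j / x j * x j ≤ t * x j := mul_le_mul_of_nonneg_right h (hx j).le
      rwa [div_mul_cancel₀ _ (hx j).ne'] at this
    have hfy : f y i0 ≤ μ * y i0 := by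
      have h1 := hf_mono y (t • x) hy (fun i => by
          simpa [Pi.smul_apply, smul_eq_mul] using mul_pos htpos (hx i))
        (fun j => by simpa [Pi.smul_apply, smul_eq_mul] using hle j) i0
      rw [hf_hom t htpos x hx] at h1
      have h1' : f y i0 ≤ t * f x i0 := h1
      rw [hμx i0] at h1'
      have htx : t * x i0 = y i0 := div_mul_cancel₀ _ (hx i0).ne'
      calc f y i0 ≤ t * (μ * x i0) := h1'
        _ = μ * (t * x i0) := by ring
        _ = μ * y i0 := by rw [htx]
    calc (⨅ i, f y i / y i) ≤ f y i0 / y i0 := ciInf_le (Finite.bddBelow_range _) i0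
      _ ≤ μ := by rw [div_le_iff₀ (hy i0)]; linarith
  -- key lemma 2: for any positive y, max ratio ≥ μ
  have key2 : ∀ y : Fin n → ℝ, (∀ i, 0 < y i) → μ ≤ (⨆ i, f y i / y i) := by
    intro y hy
    obtain ⟨i0, hi0⟩ := Finite.exists_min (fun i => y i / x i)
    set t := y i0 / x i0 with ht
    have htpos : 0 < t := div_pos (hy i0) (hx i0)
    have hle : ∀ j, t * x j ≤ y j := by
      intro j
      have h := hi0 j
      have : t * x j ≤ y j / x j * x j := mul_le_mul_of_nonneg_right h (hx j).le
      rwa [div_mul_cancel₀ _ (hx j).ne'] at this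
    have hfy : μ * y i0 ≤ f y i0 := by
      have h1 := hf_mono (t • x) y (fun i => by
          simpa [Pi.smul_apply, smul_eq_mul] using mul_pos htpos (hx i)) hy
        (fun j => by simpa [Pi.smul_apply, smul_eq_mul] using hle j) i0
      rw [hf_hom t htpos x hx] at h1
      have h1' : t * f x i0 ≤ f y i0 := h1
      rw [hμx i0] at h1'
      have htx : t * x i0 = y i0 := div_mul_cancel₀ _ (hx i0).ne'
      calc μ * y i0 = μ * (t * x i0) := by rw [htx]
        _ = t * (μ * x i0) := by ring
        _ ≤ f y i0 := h1'
    calc μ ≤ f y i0 / y i0 := by rw [le_div_iff₀ (hy i0)]; linarith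
      _ ≤ ⨆ i, f y i / y i := le_ciSup (f := fun i => f y i / y i) (Finite.bddAbove_range _) i0
  have hxsup : (⨆ i, f x i / x i) = μ := by
    have h : ∀ i, f x i / x i = μ := fun i => by
      rw [hμx i, mul_div_assoc, div_self (hx i).ne', mul_one]
    simp only [h, ciSup_const]
  have hxinf : (⨅ i, f x i / x i) = μ := by
    have h : ∀ i, f x i / x i = μ := fun i => by
      rw [hμx i, mul_div_assoc, div_self (hx i).ne', mul_one]
    simp only [h, ciInf_const]
  constructor
  · apply le_antisymm
    · exact ciInf_le_of_le ⟨μ, by rintro v ⟨y, rfl⟩; exact key2 y.1 y.2⟩ ⟨x, hx⟩ hxsup.le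
    · exact le_ciInf fun y => key2 y.1 y.2
  · apply le_antisymm
    · exact ciSup_le fun y => key1 y.1 y.2
    · exact le_ciSup_of_le ⟨μ, by rintro v ⟨y, rfl⟩; exact key1 y.1 y.2⟩ ⟨x, hx⟩ hxinf.ge
end

section
/- Let g: (0,∞) → (0,∞) be nondecreasing, multiplicatively convex, and real analytic. Then g is bounded (equivalently constant) if and only if g'(x) = 0 for some x > 0. -/
/-- A nondecreasing, multiplicatively convex, real analytic function
`g : (0,∞) → (0,∞)` is bounded on `(0,∞)` if and only if its derivative vanishes at
some point `x > 0`. -/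
theorem mult_convex_analytic_bounded_iff_deriv_zero (g : ℝ → ℝ)
    (hg_pos : ∀ x, 0 < x → 0 < g x)
    (hg_mono : ∀ x y, 0 < x → x ≤ y → g x ≤ g y)
    (hg_conv : ConvexOn ℝ Set.univ (fun t : ℝ => Real.log (g (Real.exp t))))
    (hg_analytic : AnalyticOnNhd ℝ g (Set.Ioi (0 : ℝ))) :
    BddAbove (g '' Set.Ioi (0 : ℝ)) ↔ ∃ x, 0 < x ∧ deriv g x = 0 := by
  set h : ℝ → ℝ := fun t : ℝ => Real.log (g (Real.exp t)) with hh
  constructor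
  · rintro ⟨M, hM⟩
    -- g is bounded above by M on (0,∞); show h is constant, hence g constant near 1.
    have hM' : ∀ x : ℝ, 0 < x → g x ≤ M := fun x hx =>
      hM ⟨x, hx, rfl⟩
    -- h is constant
    have hconst : ∀ a b : ℝ, a < b → h a = h b := by
      intro a b hab
      by_contra hne
      have hle : h a ≤ h b := by
        have := hg_mono (Real.exp a) (Real.exp b) (Real.exp_pos a)
          (Real.exp_le_exp.mpr hab.le)
        exact Real.log_le_log (hg_pos _ (Real.exp_pos a)) this
      have hlt : h a < h b := lt_of_le_of_ne hle hne
      set s : ℝ := (h b - h a) / (b - a) with hs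
      have hs_pos : 0 < s := div_pos (by linarith) (by linarith)
      -- pick t large
      set t : ℝ := max (b + 1) (a + (Real.log M + 1 - h a) / s) with ht
      have htb : b < t := lt_of_lt_of_le (by linarith) (le_max_left _ _)
      have hta : a < t := hab.trans htb
      -- slope monotonicity
      have hmono := hg_conv.slope_mono (Set.mem_univ a)
      have hsl : slope h a b ≤ slope h a t := by
        apply hmono (by simp [hab.ne']) (by simp [hta.ne'])
        exact htb.le
      rw [slope_def_field, slope_def_field] at hsl
      have hba : (0:ℝ) < b - a := by linarith
      have hta' : (0:ℝ) < t - a := by linarith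
      have hslope := (div_le_div_iff₀ hba hta').mp hsl
      have h1 : s * (t - a) ≤ h t - h a := by
        rw [hs, div_mul_eq_mul_div, div_le_iff₀ hba]
        linarith
      have h2' : a + (Real.log M + 1 - h a) / s ≤ t := le_max_right _ _
      have h3 : Real.log M + 1 - h a ≤ s * (t - a) := by
        have hd : (Real.log M + 1 - h a) / s ≤ t - a := by linarith
        have := (div_le_iff₀ hs_pos).mp hd
        rw [mul_comm] at this
        linarith
      have h4 : Real.log M + 1 ≤ h t := by linarith
      have h5 : h t ≤ Real.log M :=
        Real.log_le_log (hg_pos _ (Real.exp_pos t)) (hM' _ (Real.exp_pos t))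
      linarith
    -- hence g is constant on (0,∞)
    have hgconst : ∀ x : ℝ, 0 < x → g x = g 1 := by
      intro x hx
      have hx' : Real.exp (Real.log x) = x := Real.exp_log hx
      have : h (Real.log x) = h 0 := by
        rcases lt_trichotomy (Real.log x) 0 with hl | hl | hl
        · exact hconst _ _ hl
        · rw [hl]
        · exact (hconst _ _ hl).symm
      have hlog : Real.log (g x) = Real.log (g 1) := by
        simpa [h, hx', Real.exp_zero] using this
      have := congrArg Real.exp hlog
      rwa [Real.exp_log (hg_pos x hx), Real.exp_log (hg_pos 1 one_pos)] at this
    refine ⟨1, one_pos, ?_⟩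
    have hev : g =ᶠ[nhds (1 : ℝ)] fun _ => g 1 := by
      filter_upwards [Ioi_mem_nhds (show (0:ℝ) < 1 from one_pos)] with y hy
      exact hgconst y hy
    rw [hev.deriv_eq]
    simp
  · rintro ⟨x₀, hx₀, hderiv⟩
    -- h has derivative 0 at log x₀
    set t₀ : ℝ := Real.log x₀ with ht₀
    have hexp : Real.exp t₀ = x₀ := Real.exp_log hx₀
    have hgd : DifferentiableAt ℝ g x₀ := (hg_analytic x₀ hx₀).differentiableAt
    have hgd' : HasDerivAt g (deriv g x₀) (Real.exp t₀) := by
      rw [hexp]; exact hgd.hasDerivAt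
    have hge : HasDerivAt (fun t => g (Real.exp t)) (deriv g x₀ * Real.exp t₀) t₀ :=
      hgd'.comp t₀ (Real.hasDerivAt_exp t₀)
    have hgx₀ : (0:ℝ) < g x₀ := hg_pos x₀ hx₀
    have hlog : HasDerivAt Real.log (g x₀)⁻¹ (g (Real.exp t₀)) := by
      rw [hexp]; exact Real.hasDerivAt_log hgx₀.ne'
    have hhd : HasDerivAt h ((g x₀)⁻¹ * (deriv g x₀ * Real.exp t₀)) t₀ :=
      by have := hlog.comp t₀ hge; exact this
    have hhd0 : HasDerivAt h 0 t₀ := by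
      rw [hderiv] at hhd; simpa using hhd
    -- for t < t₀, h t = h t₀
    have hconst : ∀ t : ℝ, t < t₀ → h t = h t₀ := by
      intro t ht
      have hsl := hg_conv.slope_le_of_hasDerivAt (Set.mem_univ t) (Set.mem_univ t₀) ht hhd0
      rw [slope_def_field] at hsl
      have hle : h t ≤ h t₀ := by
        have := hg_mono (Real.exp t) (Real.exp t₀) (Real.exp_pos t)
          (Real.exp_le_exp.mpr ht.le)
        exact Real.log_le_log (hg_pos _ (Real.exp_pos t)) this
      have hpos : 0 < t₀ - t := by linarith
      have : h t₀ - h t ≤ 0 := by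
        by_contra hc
        push_neg at hc
        have : (0:ℝ) < (h t₀ - h t) / (t₀ - t) := div_pos (by linarith) hpos
        linarith
      linarith
    -- hence g is constant on (0, x₀)
    have hgc : ∀ x : ℝ, 0 < x → x < x₀ → g x = g x₀ := by
      intro x hx hxx
      have hl : Real.log x < t₀ := Real.log_lt_log hx hxx
      have := hconst (Real.log x) hl
      have hlog : Real.log (g x) = Real.log (g x₀) := by
        simpa [h, Real.exp_log hx, hexp] using this
      have := congrArg Real.exp hlog
      rwa [Real.exp_log (hg_pos x hx), Real.exp_log hgx₀] at this
    -- identity theorem: g = const on (0,∞)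
    have hconstfun : AnalyticOnNhd ℝ (fun _ : ℝ => g x₀) (Set.Ioi (0:ℝ)) :=
      fun x _ => analyticAt_const
    have hz₀ : x₀ / 2 ∈ Set.Ioi (0:ℝ) := by simp [hx₀, half_pos]
    have hev : g =ᶠ[nhds (x₀ / 2)] fun _ => g x₀ := by
      filter_upwards [Ioo_mem_nhds (half_pos hx₀) (half_lt_self hx₀)] with y hy
      exact hgc y hy.1 hy.2
    have heq := hg_analytic.eqOn_of_preconnected_of_eventuallyEq hconstfun
      isPreconnected_Ioi hz₀ hev
    refine ⟨g x₀, ?_⟩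
    rintro y ⟨x, hx, rfl⟩
    exact le_of_eq (heq hx)
end

section
/- Let X be a real Banach space and let x, y ∈ X with ‖x‖ = 1. Then there exists a norming functional x* (i.e., ‖x*‖ = 1 and x*(x) = 1) such that lim_{t→∞} (‖tx − y‖ − x*(tx − y)) = 0. -/
open Filter

section aux
variable {X : Type*} [NormedAddCommGroup X] [NormedSpace ℝ X]

variable (x : X)

/-- `f z t = ‖t • x + z‖ - t`. -/
noncomputable def auxF (z : X) (t : ℝ) : ℝ := ‖t • x + z‖ - t

/-- `p z = ⨅ t, ‖t • x + z‖ - t`. -/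
noncomputable def auxP (z : X) : ℝ := ⨅ t : ℝ, auxF x z t

variable {x}

lemma auxF_lower (hx : ‖x‖ = 1) (z : X) (t : ℝ) : -‖z‖ ≤ auxF x z t := by
  have h1 : ‖t • x‖ - ‖z‖ ≤ ‖t • x + z‖ := by
    have := norm_add_le (t • x + z) (-z)
    simp only [add_neg_cancel_right, norm_neg] at this
    linarith
  have h2 : t ≤ ‖t • x‖ := by
    rw [norm_smul, hx, Real.norm_eq_abs, mul_one]
    exact le_abs_self t
  simp only [auxF]; linarith

lemma auxF_anti (hx : ‖x‖ = 1) (z : X) : Antitone (fun t => auxF x z t) := by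
  intro s t hst
  have : ‖t • x + z‖ ≤ ‖s • x + z‖ + (t - s) := by
    have := norm_add_le (s • x + z) ((t - s) • x)
    rw [norm_smul, hx, Real.norm_eq_abs, mul_one, abs_of_nonneg (by linarith)] at this
    calc ‖t • x + z‖ = ‖s • x + z + (t - s) • x‖ := by
          congr 1; rw [sub_smul]; abel
      _ ≤ ‖s • x + z‖ + (t - s) := this
  simp only [auxF]; linarith

lemma auxF_bddBelow (hx : ‖x‖ = 1) (z : X) : BddBelow (Set.range fun t => auxF x z t) :=
  ⟨-‖z‖, by rintro _ ⟨t, rfl⟩; exact auxF_lower hx z t⟩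

lemma auxP_tendsto (hx : ‖x‖ = 1) (z : X) :
    Tendsto (fun t => auxF x z t) atTop (nhds (auxP x z)) :=
  tendsto_atTop_ciInf (auxF_anti hx z) (auxF_bddBelow hx z)

lemma auxP_le_norm (hx : ‖x‖ = 1) (z : X) : auxP x z ≤ ‖z‖ := by
  have := ciInf_le (auxF_bddBelow hx z) (0 : ℝ)
  simpa [auxP, auxF] using this

lemma auxP_add (hx : ‖x‖ = 1) (z w : X) : auxP x (z + w) ≤ auxP x z + auxP x w := by
  have h1 : Tendsto (fun t : ℝ => auxF x (z + w) (2 * t)) atTop (nhds (auxP x (z + w))) :=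
    (auxP_tendsto hx (z + w)).comp (tendsto_id.const_mul_atTop two_pos)
  have h2 : Tendsto (fun t : ℝ => auxF x z t + auxF x w t) atTop
      (nhds (auxP x z + auxP x w)) := (auxP_tendsto hx z).add (auxP_tendsto hx w)
  refine le_of_tendsto_of_tendsto' h1 h2 fun t => ?_
  have : ‖(2 * t) • x + (z + w)‖ ≤ ‖t • x + z‖ + ‖t • x + w‖ := by
    have := norm_add_le (t • x + z) (t • x + w)
    calc ‖(2 * t) • x + (z + w)‖ = ‖t • x + z + (t • x + w)‖ := by
          congr 1; rw [two_mul, add_smul]; abel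
      _ ≤ _ := this
  simp only [auxF]; linarith

lemma auxP_smul (hx : ‖x‖ = 1) (z : X) {c : ℝ} (hc : 0 < c) :
    auxP x (c • z) = c * auxP x z := by
  have h1 : Tendsto (fun t : ℝ => auxF x (c • z) (c * t)) atTop (nhds (auxP x (c • z))) :=
    (auxP_tendsto hx (c • z)).comp (tendsto_id.const_mul_atTop hc)
  have h2 : Tendsto (fun t : ℝ => c * auxF x z t) atTop (nhds (c * auxP x z)) :=
    (auxP_tendsto hx z).const_mul c
  refine tendsto_nhds_unique h1 (h2.congr fun t => ?_)
  simp only [auxF]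
  rw [mul_sub]
  congr 1
  rw [← norm_smul_of_nonneg hc.le]
  congr 1
  rw [smul_add, smul_smul]

lemma auxP_zero (hx : ‖x‖ = 1) : auxP x (0 : X) = 0 := by
  have h1 : auxP x (0 : X) ≤ 0 := by simpa using auxP_le_norm hx 0
  have h2 := auxP_add hx (0 : X) 0
  simp only [add_zero] at h2
  linarith

lemma auxP_nonneg_sum (hx : ‖x‖ = 1) (z : X) : 0 ≤ auxP x z + auxP x (-z) := by
  have := auxP_add hx z (-z)
  simpa [auxP_zero hx] using this

lemma auxP_key (hx : ‖x‖ = 1) (v : X) (c : ℝ) : c * auxP x v ≤ auxP x (c • v) := by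
  rcases lt_trichotomy c 0 with h | rfl | h
  · have : c • v = (-c) • (-v) := by simp
    rw [this, auxP_smul hx _ (neg_pos.mpr h)]
    have := auxP_nonneg_sum hx v
    nlinarith
  · simp [auxP_zero hx]
  · rw [auxP_smul hx _ h]

lemma auxP_x (hx : ‖x‖ = 1) : auxP x x = 1 := by
  apply le_antisymm
  · have := ciInf_le (auxF_bddBelow hx x) (0 : ℝ)
    simpa [auxP, auxF, hx] using this
  · refine le_ciInf fun t => ?_
    have : ‖t • x + x‖ = |t + 1| := by
      rw [show t • x + x = (t + 1) • x by rw [add_smul, one_smul], norm_smul, hx,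
        Real.norm_eq_abs, mul_one]
    simp only [auxF, this]
    rcases abs_cases (t + 1) with ⟨h, _⟩ | ⟨h, _⟩ <;> linarith

lemma auxP_neg_x (hx : ‖x‖ = 1) : auxP x (-x) = -1 := by
  apply le_antisymm
  · have := ciInf_le (auxF_bddBelow hx (-x)) (1 : ℝ)
    have e : ‖(1 : ℝ) • x + -x‖ = 0 := by simp
    simpa [auxP, auxF, e] using this
  · refine le_ciInf fun t => ?_
    have : ‖t • x + -x‖ = |t - 1| := by
      rw [show t • x + -x = (t - 1) • x by rw [sub_smul, one_smul]; abel, norm_smul, hx,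
        Real.norm_eq_abs, mul_one]
    simp only [auxF, this]
    rcases abs_cases (t - 1) with ⟨h, _⟩ | ⟨h, _⟩ <;> linarith

end aux

/-- For any unit vector `x` and any `y` in a real Banach space, there is a norming
functional `x*` of `x` with `lim_{t→∞} (‖t x − y‖ − x*(t x − y)) = 0`. -/
theorem exists_norming_functional_asymptotic
    (X : Type*) [NormedAddCommGroup X] [NormedSpace ℝ X] [CompleteSpace X]
    (x y : X) (hx : ‖x‖ = 1) :
    ∃ xstar : StrongDual ℝ X, ‖xstar‖ = 1 ∧ xstar x = 1 ∧
      Filter.Tendsto (fun t : ℝ => ‖t • x - y‖ - xstar (t • x - y))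
        Filter.atTop (nhds 0) := by
  classical
  have hx0 : x ≠ 0 := by intro h; rw [h, norm_zero] at hx; norm_num at hx
  set v : X := if y = 0 then x else -y with hv_def
  have hv : v ≠ 0 := by
    rw [hv_def]; split
    · exact hx0
    · simpa using ‹¬ y = 0›
  -- partial linear map on span {v} sending v to auxP x v
  set f : X →ₗ.[ℝ] ℝ := LinearPMap.mkSpanSingleton v (auxP x v) hv with hf_def
  have hdom : f.domain = Submodule.span ℝ {v} := rfl
  have hf_le : ∀ w : f.domain, f w ≤ auxP x (w : X) := by
    rintro ⟨w, hw⟩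
    rw [hdom] at hw
    obtain ⟨c, rfl⟩ := Submodule.mem_span_singleton.mp hw
    have : f ⟨c • v, hw⟩ = c • auxP x v := LinearPMap.mkSpanSingleton'_apply _ _ _ c _
    rw [this, smul_eq_mul]
    exact auxP_key hx v c
  obtain ⟨g, hg_ext, hg_le⟩ := exists_extension_of_le_sublinear f (auxP x)
    (fun c hc z => auxP_smul hx z hc) (fun z w => auxP_add hx z w) hf_le
  -- g is bounded
  have hg_bound : ∀ z : X, |g z| ≤ ‖z‖ := by
    intro z
    rw [abs_le]
    constructor
    · have := (hg_le (-z)).trans (auxP_le_norm hx (-z))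
      simp only [map_neg, norm_neg] at this
      linarith
    · exact (hg_le z).trans (auxP_le_norm hx z)
  set F : StrongDual ℝ X := LinearMap.mkContinuous g 1
    (fun z => by rw [one_mul]; exact (Real.norm_eq_abs _).le.trans (hg_bound z)) with hF_def
  have hFapp : ∀ z, F z = g z := fun z => rfl
  -- F x = 1
  have hgx : g x = 1 := by
    have h1 : g x ≤ 1 := (hg_le x).trans_eq (auxP_x hx)
    have h2 : g (-x) ≤ -1 := (hg_le (-x)).trans_eq (auxP_neg_x hx)
    rw [map_neg] at h2
    linarith
  -- g (-y) = auxP x (-y)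
  have hgy : g (-y) = auxP x (-y) := by
    by_cases h0 : y = 0
    · simp [h0, auxP_zero hx]
    · have hvy : v = -y := by rw [hv_def, if_neg h0]
      have hmem : (-y : X) ∈ f.domain := by
        rw [hdom, hvy]; exact Submodule.mem_span_singleton_self _
      have := hg_ext ⟨-y, hmem⟩
      rw [this]
      have : f ⟨-y, hmem⟩ = auxP x v := by
        have hmem' : (v : X) ∈ f.domain := by rw [hdom]; exact Submodule.mem_span_singleton_self _
        have e : f ⟨v, hmem'⟩ = auxP x v := LinearPMap.mkSpanSingleton_apply ℝ ℝ hv _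
        have heq : (⟨-y, hmem⟩ : f.domain) = ⟨v, hmem'⟩ := Subtype.ext hvy.symm
        rw [heq]; exact e
      rw [this, hvy]
  -- norm of F
  have hFnorm : ‖F‖ = 1 := by
    apply le_antisymm
    · exact LinearMap.mkContinuous_norm_le g zero_le_one _
    · have : (1 : ℝ) = ‖F x‖ := by rw [hFapp, hgx, norm_one]
      rw [this]
      calc ‖F x‖ ≤ ‖F‖ * ‖x‖ := F.le_opNorm x
        _ = ‖F‖ := by rw [hx, mul_one]
  refine ⟨F, hFnorm, by rw [hFapp, hgx], ?_⟩
  -- the limit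
  have key : ∀ t : ℝ, ‖t • x - y‖ - F (t • x - y) = auxF x (-y) t + g y := by
    intro t
    have e1 : t • x - y = t • x + (-y) := by abel
    rw [hFapp, e1]
    have : g (t • x + -y) = t * g x + g (-y) := by
      rw [map_add, map_smul, smul_eq_mul]
    rw [this, hgx, mul_one, auxF]
    have h2 : g (-y) = -g y := by rw [map_neg]
    linarith
  have hlim : Filter.Tendsto (fun t : ℝ => auxF x (-y) t + g y) Filter.atTop
      (nhds (auxP x (-y) + g y)) := (auxP_tendsto hx (-y)).add_const _
  have hzero : auxP x (-y) + g y = 0 := by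
    rw [← hgy]; rw [map_neg]; ring
  rw [show (0:ℝ) = auxP x (-y) + g y from hzero.symm]
  exact hlim.congr fun t => (key t).symm
end

section
/- Let f: R^n_{>0} → R^n_{>0} be order-preserving and homogeneous, and let J be a nonempty proper subset of [n]. Then there exists a strictly positive x with max_{j∈J} f(x)_j/x_j < min_{i∉J} f(x)_i/x_i if and only if r(f^J_0) < λ(f^{Jc}_∞). -/
open ENNReal Filter Topology

/-- Lemma 3.3 of the paper: for an order-preserving homogeneous map `f` of the positive
orthant (with its continuous extension to `[0,∞]^n`, modeled here as a continuous
monotone homogeneous self-map of `[0,∞]^n` preserving the strictly positive finite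
vectors), and a nonempty proper subset `J ⊆ [n]`, there is a strictly positive `x` with
`max_{j∈J} f(x)_j/x_j < min_{i∉J} f(x)_i/x_i` if and only if
`r(f^J_0) < λ(f^{Jᶜ}_∞)`. -/
theorem exists_separating_point_iff_collatzWielandt (n : ℕ)
    (f : (Fin n → ℝ≥0∞) → (Fin n → ℝ≥0∞))
    (hf_mono : Monotone f)
    (hf_hom : ∀ c : ℝ≥0∞, 0 < c → c ≠ ⊤ → ∀ x, f (c • x) = c • f x)
    (hf_cont : Continuous f)
    (hf_pos : ∀ x : Fin n → ℝ≥0∞, (∀ i, 0 < x i ∧ x i ≠ ⊤) →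
      ∀ i, 0 < f x i ∧ f x i ≠ ⊤)
    (J : Finset (Fin n)) (hJ : J.Nonempty) (hJne : J ≠ Finset.univ) :
    (∃ x : Fin n → ℝ≥0∞, (∀ i, 0 < x i ∧ x i ≠ ⊤) ∧
        (⨆ j ∈ J, f x j / x j) < (⨅ i ∈ Jᶜ, f x i / x i))
    ↔ (⨅ x : {x : Fin n → ℝ≥0∞ // ∀ i, 0 < x i ∧ x i ≠ ⊤},
          ⨆ j ∈ J, f (fun k => if k ∈ J then x.1 k else 0) j / x.1 j)
        < (⨆ x : {x : Fin n → ℝ≥0∞ // ∀ i, 0 < x i ∧ x i ≠ ⊤},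
            ⨅ i ∈ Jᶜ, f (fun k => if k ∈ J then ⊤ else x.1 k) i / x.1 i) := by
  constructor
  · -- easy direction: r ≤ sup ratio at x < inf ratio at x ≤ λ
    rintro ⟨x, hx, hlt⟩
    have h1 : (⨅ y : {x : Fin n → ℝ≥0∞ // ∀ i, 0 < x i ∧ x i ≠ ⊤},
          ⨆ j ∈ J, f (fun k => if k ∈ J then y.1 k else 0) j / y.1 j)
        ≤ ⨆ j ∈ J, f x j / x j := by
      refine iInf_le_of_le ⟨x, hx⟩ (iSup₂_mono fun j hj => ?_)
      refine ENNReal.div_le_div_right ((hf_mono fun k => ?_) j) _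
      by_cases hk : k ∈ J <;> simp [hk]
    have h2 : (⨅ i ∈ Jᶜ, f x i / x i)
        ≤ ⨆ y : {x : Fin n → ℝ≥0∞ // ∀ i, 0 < x i ∧ x i ≠ ⊤},
            ⨅ i ∈ Jᶜ, f (fun k => if k ∈ J then ⊤ else y.1 k) i / y.1 i := by
      refine le_iSup_of_le ⟨x, hx⟩ (iInf₂_mono fun i hi => ?_)
      refine ENNReal.div_le_div_right ((hf_mono fun k => ?_) i) _
      by_cases hk : k ∈ J <;> simp [hk]
    exact h1.trans_lt (hlt.trans_le h2)
  · intro h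
    obtain ⟨t, ht1, ht2⟩ := exists_between h
    have httop : t ≠ ⊤ := ht2.ne_top
    obtain ⟨⟨u, hu⟩, hu_lt⟩ := iInf_lt_iff.mp ht1
    obtain ⟨⟨v, hv⟩, hv_lt⟩ := lt_iSup_iff.mp ht2
    -- the limit objects
    set Pu : Fin n → ℝ≥0∞ := fun k => if k ∈ J then u k else 0 with hPu
    set Pv : Fin n → ℝ≥0∞ := fun k => if k ∈ J then ⊤ else v k with hPv
    set y : ℝ≥0∞ → (Fin n → ℝ≥0∞) := fun s k => if k ∈ J then u k else s * v k with hy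
    set z : ℝ≥0∞ → (Fin n → ℝ≥0∞) := fun s k => if k ∈ J then s⁻¹ * u k else v k with hz
    set l : Filter ℝ≥0∞ := 𝓝[>] 0 with hl
    haveI : l.NeBot := nhdsGT_neBot_of_exists_gt ⟨1, zero_lt_one⟩
    have hid : Tendsto (fun s : ℝ≥0∞ => s) l (𝓝 0) := tendsto_id.mono_left nhdsWithin_le_nhds
    have T1 : Tendsto y l (𝓝 Pu) := by
      rw [tendsto_pi_nhds]
      intro k
      by_cases hk : k ∈ J
      · simpa [hy, hPu, hk] using (tendsto_const_nhds : Tendsto (fun _ : ℝ≥0∞ => u k) l _)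
      · have := ENNReal.Tendsto.mul_const hid (Or.inr (hv k).2)
        simpa [hy, hPu, hk] using this
    have T2 : Tendsto z l (𝓝 Pv) := by
      rw [tendsto_pi_nhds]
      intro k
      by_cases hk : k ∈ J
      · have hinv : Tendsto (fun s : ℝ≥0∞ => s⁻¹) l (𝓝 ⊤) := by
          simpa using hid.inv
        have := ENNReal.Tendsto.mul_const (b := u k) hinv (Or.inl (by simp))
        rw [ENNReal.top_mul (hu k).1.ne'] at this
        simpa [hz, hPv, hk] using this
      · simpa [hz, hPv, hk] using (tendsto_const_nhds : Tendsto (fun _ : ℝ≥0∞ => v k) l _)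
    -- eventual bound for J-coordinates
    have hJev : ∀ᶠ s in l, ∀ j ∈ J, f (y s) j / u j < t := by
      rw [Filter.eventually_all_finset]
      intro j hj
      have hlim : Tendsto (fun s => f (y s) j / u j) l (𝓝 (f Pu j / u j)) := by
        have : Tendsto (fun s => f (y s) j) l (𝓝 (f Pu j)) :=
          ((continuous_apply j).comp hf_cont).continuousAt.tendsto.comp T1
        exact ENNReal.Tendsto.div_const this (Or.inr (hu j).1.ne')
      refine hlim.eventually_lt_const ?_
      exact lt_of_le_of_lt (le_iSup₂ (f := fun j (_ : j ∈ J) => f Pu j / u j) j hj) hu_lt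
    -- eventual bound for Jᶜ-coordinates
    have hJcev : ∀ᶠ s in l, ∀ i ∈ Jᶜ, t < f (z s) i / v i := by
      rw [Filter.eventually_all_finset]
      intro i hi
      have hlim : Tendsto (fun s => f (z s) i / v i) l (𝓝 (f Pv i / v i)) := by
        have : Tendsto (fun s => f (z s) i) l (𝓝 (f Pv i)) :=
          ((continuous_apply i).comp hf_cont).continuousAt.tendsto.comp T2
        exact ENNReal.Tendsto.div_const this (Or.inr (hv i).1.ne')
      refine hlim.eventually_const_lt ?_
      exact lt_of_lt_of_le hv_lt (iInf₂_le (f := fun i (_ : i ∈ Jᶜ) => f Pv i / v i) i hi)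
    have hs1 : ∀ᶠ s in l, s < 1 :=
      eventually_nhdsWithin_of_eventually_nhds
        (Filter.Tendsto.eventually_lt_const zero_lt_one
          (tendsto_id : Tendsto id (𝓝 (0 : ℝ≥0∞)) (𝓝 0)))
    have hs0 : ∀ᶠ s in l, s ∈ Set.Ioi (0 : ℝ≥0∞) := eventually_mem_nhdsWithin
    obtain ⟨s, hsJ, hsJc, hslt1, hspos⟩ := (hJev.and (hJcev.and (hs1.and hs0))).exists
    have hs_ne0 : s ≠ 0 := (Set.mem_Ioi.mp hspos).ne'
    have hs_netop : s ≠ ⊤ := (hslt1.trans_le le_top).ne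
    refine ⟨y s, ?_, ?_⟩
    · intro k
      by_cases hk : k ∈ J
      · simpa [hy, hk] using hu k
      · constructor
        · simpa [hy, hk] using ENNReal.mul_pos hs_ne0 (hv k).1.ne'
        · simpa [hy, hk] using ENNReal.mul_ne_top hs_netop (hv k).2
    · -- key: y s = s • z s
      have hysz : y s = s • z s := by
        funext k
        by_cases hk : k ∈ J
        · simp only [hy, hz, hk, if_pos, Pi.smul_apply, smul_eq_mul]
          rw [← mul_assoc, ENNReal.mul_inv_cancel hs_ne0 hs_netop, one_mul]
        · simp [hy, hz, hk]
      have hfy : f (y s) = s • f (z s) := by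
        rw [hysz, hf_hom s (pos_iff_ne_zero.mpr hs_ne0) hs_netop]
      have ht0 : (0 : ℝ≥0∞) < t := lt_of_le_of_lt zero_le ht1
      have hsup : (⨆ j ∈ J, f (y s) j / y s j) < t := by
        rw [← Finset.sup_eq_iSup]
        rw [Finset.sup_lt_iff (by simpa using ht0)]
        intro j hj
        have : y s j = u j := by simp [hy, hj]
        rw [this]
        exact hsJ j hj
      have hinf : t < (⨅ i ∈ Jᶜ, f (y s) i / y s i) := by
        rw [← Finset.inf_eq_iInf]
        rw [Finset.lt_inf_iff (httop.lt_top)]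
        intro i hi
        have hiJ : i ∉ J := Finset.mem_compl.mp hi
        have hxi : y s i = s * v i := by simp [hy, hiJ]
        have hfi : f (y s) i = s * f (z s) i := by rw [hfy]; simp
        rw [hxi, hfi, ENNReal.mul_div_mul_left _ _ hs_ne0 hs_netop]
        exact hsJc i hi
      exact hsup.trans hinf
end

section
/- Let f: R^n_{>0} → R^n_{>0} be order-preserving and homogeneous. If A ⊆ B ⊆ [n], then r(f^A_0) ≤ r(f^B_0) and λ(f^A_∞) ≥ λ(f^B_∞). -/
open ENNReal

/-- Monotonicity of the auxiliary Collatz-Wielandt numbers: if `A ⊆ B ⊆ [n]` then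
`r(f^A_0) ≤ r(f^B_0)` and `λ(f^A_∞) ≥ λ(f^B_∞)`, for an order-preserving homogeneous
map `f` of the positive orthant (modeled with its continuous extension as a continuous
monotone homogeneous self-map of `[0,∞]^n` preserving strictly positive finite
vectors). -/
theorem collatzWielandt_aux_mono (n : ℕ)
    (f : (Fin n → ℝ≥0∞) → (Fin n → ℝ≥0∞))
    (hf_mono : Monotone f)
    (hf_hom : ∀ c : ℝ≥0∞, 0 < c → c ≠ ⊤ → ∀ x, f (c • x) = c • f x)
    (hf_cont : Continuous f)
    (hf_pos : ∀ x : Fin n → ℝ≥0∞, (∀ i, 0 < x i ∧ x i ≠ ⊤) →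
      ∀ i, 0 < f x i ∧ f x i ≠ ⊤)
    (A B : Finset (Fin n)) (hA : A.Nonempty) (hAB : A ⊆ B) :
    (⨅ x : {x : Fin n → ℝ≥0∞ // ∀ i, 0 < x i ∧ x i ≠ ⊤},
        ⨆ j ∈ A, f (fun k => if k ∈ A then x.1 k else 0) j / x.1 j)
      ≤ (⨅ x : {x : Fin n → ℝ≥0∞ // ∀ i, 0 < x i ∧ x i ≠ ⊤},
          ⨆ j ∈ B, f (fun k => if k ∈ B then x.1 k else 0) j / x.1 j) ∧
    (⨆ x : {x : Fin n → ℝ≥0∞ // ∀ i, 0 < x i ∧ x i ≠ ⊤},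
        ⨅ j ∈ A, f (fun k => if k ∈ A then x.1 k else ⊤) j / x.1 j)
      ≥ (⨆ x : {x : Fin n → ℝ≥0∞ // ∀ i, 0 < x i ∧ x i ≠ ⊤},
          ⨅ j ∈ B, f (fun k => if k ∈ B then x.1 k else ⊤) j / x.1 j) := by
  constructor
  · refine iInf_mono fun x => iSup₂_le fun j hj => ?_
    have harg : (fun k => if k ∈ A then x.1 k else 0) ≤
        (fun k => if k ∈ B then x.1 k else 0) := by
      intro k
      by_cases hk : k ∈ A
      · simp [hk, hAB hk]
      · simp [hk]
    refine le_trans ?_ (le_iSup₂_of_le j (hAB hj) le_rfl)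
    exact ENNReal.div_le_div_right (hf_mono harg j) _
  · refine iSup_mono fun x => le_iInf₂ fun j hj => ?_
    have harg : (fun k => if k ∈ B then x.1 k else ⊤) ≤
        (fun k => if k ∈ A then x.1 k else ⊤) := by
      intro k
      by_cases hk : k ∈ A
      · simp [hk, hAB hk]
      · simp [hk]
    refine le_trans (iInf₂_le j (hAB hj)) ?_
    exact ENNReal.div_le_div_right (hf_mono harg j) _
end

section
/- Let f: R^n_{>0} → R^n_{>0} be order-preserving and homogeneous. If r(f^J_0) > λ(f^{Jc}_∞) for some nonempty proper subset J of [n], then f has no eigenvector with all entries strictly positive. -/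
open ENNReal

/-- Theorem 3.5 of the paper: if `r(f^J_0) > λ(f^{Jᶜ}_∞)` for some nonempty proper
subset `J` of `[n]`, then the order-preserving homogeneous map `f` (modeled with its
continuous extension as a continuous monotone homogeneous self-map of `[0,∞]^n`
preserving strictly positive finite vectors) has no strictly positive eigenvector. -/
theorem no_positive_eigenvector_of_collatzWielandt_gap (n : ℕ)
    (f : (Fin n → ℝ≥0∞) → (Fin n → ℝ≥0∞))
    (hf_mono : Monotone f)
    (hf_hom : ∀ c : ℝ≥0∞, 0 < c → c ≠ ⊤ → ∀ x, f (c • x) = c • f x)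
    (hf_cont : Continuous f)
    (hf_pos : ∀ x : Fin n → ℝ≥0∞, (∀ i, 0 < x i ∧ x i ≠ ⊤) →
      ∀ i, 0 < f x i ∧ f x i ≠ ⊤)
    (J : Finset (Fin n)) (hJ : J.Nonempty) (hJne : J ≠ Finset.univ)
    (hgap : (⨅ x : {x : Fin n → ℝ≥0∞ // ∀ i, 0 < x i ∧ x i ≠ ⊤},
          ⨆ j ∈ J, f (fun k => if k ∈ J then x.1 k else 0) j / x.1 j)
        > (⨆ x : {x : Fin n → ℝ≥0∞ // ∀ i, 0 < x i ∧ x i ≠ ⊤},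
            ⨅ i ∈ Jᶜ, f (fun k => if k ∈ J then ⊤ else x.1 k) i / x.1 i)) :
    ¬ ∃ (x : Fin n → ℝ≥0∞) (μ : ℝ≥0∞), (∀ i, 0 < x i ∧ x i ≠ ⊤) ∧
        0 < μ ∧ μ ≠ ⊤ ∧ f x = μ • x := by
  rintro ⟨x, μ, hx, hμ0, hμt, hfx⟩
  have hfxj : ∀ j, f x j = μ * x j := by
    intro j; rw [hfx]; rfl
  -- r-side: inf ≤ μ
  have h1 : (⨅ x : {x : Fin n → ℝ≥0∞ // ∀ i, 0 < x i ∧ x i ≠ ⊤},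
      ⨆ j ∈ J, f (fun k => if k ∈ J then x.1 k else 0) j / x.1 j) ≤ μ := by
    refine le_trans (iInf_le _ ⟨x, hx⟩) ?_
    refine iSup₂_le fun j hj => ?_
    have hle : (fun k => if k ∈ J then x k else 0) ≤ x := by
      intro k; by_cases h : k ∈ J <;> simp [h]
    calc f (fun k => if k ∈ J then x k else 0) j / x j
        ≤ f x j / x j := ENNReal.div_le_div_right (hf_mono hle j) _
      _ = μ := by
          rw [hfxj j, mul_div_assoc,
            ENNReal.div_self (hx j).1.ne' (hx j).2, mul_one]
  -- λ-side: μ ≤ sup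
  have h2 : μ ≤ ⨆ x : {x : Fin n → ℝ≥0∞ // ∀ i, 0 < x i ∧ x i ≠ ⊤},
      ⨅ i ∈ Jᶜ, f (fun k => if k ∈ J then ⊤ else x.1 k) i / x.1 i := by
    refine le_trans ?_ (le_iSup _ ⟨x, hx⟩)
    refine le_iInf₂ fun i hi => ?_
    have hle : x ≤ (fun k => if k ∈ J then ⊤ else x k) := by
      intro k; by_cases h : k ∈ J <;> simp [h]
    have : μ * x i ≤ f (fun k => if k ∈ J then ⊤ else x k) i := by
      rw [← hfxj i]; exact hf_mono hle i
    rw [ENNReal.le_div_iff_mul_le (Or.inl (hx i).1.ne') (Or.inl (hx i).2)]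
    exact this
  exact absurd (h1.trans h2) (not_le_of_gt hgap)
end

section
/- Let A be a nonnegative n×n matrix whose directed graph has a unique final class C which is primitive, and suppose ρ(A_C) > ρ(A_{[n]\C}). Then every eigenvalue of A other than ρ(A) has absolute value strictly less than ρ(A). -/
open Matrix

/-- `μ ∈ ℂ` is an eigenvalue of the real matrix `M` (viewed over `ℂ`). -/
def IsEigCx {m : Type*} [Fintype m] [DecidableEq m] (M : Matrix m m ℝ) (μ : ℂ) : Prop :=
  (μ • (1 : Matrix m m ℂ) - M.map (Complex.ofReal ·)).det = 0

/-- The spectral radius of a real square matrix: the supremum of the absolute values of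
its complex eigenvalues. -/
noncomputable def specRad {m : Type*} [Fintype m] [DecidableEq m]
    (M : Matrix m m ℝ) : ℝ :=
  sSup ((fun z : ℂ => ‖z‖) '' {μ : ℂ | IsEigCx M μ})

/-- The principal submatrix of `A` on the index set `C`. -/
def principalSub {n : ℕ} (A : Matrix (Fin n) (Fin n) ℝ) (C : Finset (Fin n)) :
    Matrix {i // i ∈ C} {i // i ∈ C} ℝ :=
  fun i j => A i.1 j.1

/-- `C` is a final class of the directed graph of the nonnegative matrix `A`: a
nonempty strongly connected set of vertices with no arcs leaving it. -/
def IsFinalClass {n : ℕ} (A : Matrix (Fin n) (Fin n) ℝ) (C : Finset (Fin n)) : Prop :=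
  C.Nonempty ∧
  (∀ i ∈ C, ∀ j ∈ C, Relation.ReflTransGen (fun a b => 0 < A a b) i j) ∧
  (∀ i ∈ C, ∀ j, 0 < A i j → j ∈ C)

namespace PFAux
open Filter
open scoped ENNReal NNReal
variable {ι : Type*} [Fintype ι] [DecidableEq ι]

lemma isEigCx_iff (M : Matrix ι ι ℝ) (μ : ℂ) :
    IsEigCx M μ ↔ μ ∈ spectrum ℂ (M.map (Complex.ofReal ·)) := by
  rw [spectrum.mem_iff, Matrix.isUnit_iff_isUnit_det, isUnit_iff_ne_zero, not_ne_iff,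
    Algebra.algebraMap_eq_smul_one]
  rfl

lemma eig_finite (M : Matrix ι ι ℝ) : {μ | IsEigCx M μ}.Finite :=
  (Matrix.finite_spectrum (R := ℂ) (M.map (Complex.ofReal ·))).subset
    fun μ hμ => (isEigCx_iff M μ).mp hμ

lemma abs_le_specRad {M : Matrix ι ι ℝ} {μ : ℂ} (h : IsEigCx M μ) :
    ‖μ‖ ≤ specRad M :=
  le_csSup ((eig_finite M).image _).bddAbove ⟨μ, h, rfl⟩

attribute [local instance] Matrix.linftyOpNormedRing Matrix.linftyOpNormedAlgebra

lemma exists_eig_max [Nonempty ι] (M : Matrix ι ι ℝ) :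
    ∃ μ, IsEigCx M μ ∧ ‖μ‖ = specRad M := by
  have hne : {μ | IsEigCx M μ}.Nonempty :=
    (spectrum.nonempty (M.map (Complex.ofReal ·))).imp fun μ hμ => (isEigCx_iff M μ).mpr hμ
  obtain ⟨μ, hμ, h⟩ := (hne.image (fun z : ℂ => ‖z‖)).csSup_mem ((eig_finite M).image _)
  exact ⟨μ, hμ, h⟩

lemma specRad_nonneg [Nonempty ι] (M : Matrix ι ι ℝ) : 0 ≤ specRad M := by
  obtain ⟨μ, _, h⟩ := exists_eig_max M
  exact h ▸ norm_nonneg μ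

lemma pow_entry_nonneg {Q : Matrix ι ι ℝ} (hQ : ∀ i j, 0 ≤ Q i j) (k : ℕ) :
    ∀ i j, 0 ≤ (Q ^ k) i j := by
  induction k with
  | zero => intro i j; rw [pow_zero]; by_cases h : i = j <;> simp [Matrix.one_apply, h]
  | succ k ih =>
    intro i j
    rw [pow_succ, Matrix.mul_apply]
    exact Finset.sum_nonneg fun l _ => mul_nonneg (ih i l) (hQ l j)

lemma mulVec_le_mulVec {Q : Matrix ι ι ℝ} (hQ : ∀ i j, 0 ≤ Q i j) {u v : ι → ℝ}
    (h : ∀ i, u i ≤ v i) (i : ι) : Q.mulVec u i ≤ Q.mulVec v i := by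
  simp only [Matrix.mulVec, dotProduct]
  exact Finset.sum_le_sum fun j _ => mul_le_mul_of_nonneg_left (h j) (hQ i j)

lemma mulVec_pos {Q : Matrix ι ι ℝ} (hQ : ∀ i j, 0 < Q i j) {v : ι → ℝ}
    (hv : ∀ i, 0 ≤ v i) (hv0 : ∃ j, v j ≠ 0) (i : ι) : 0 < Q.mulVec v i := by
  obtain ⟨j0, hj0⟩ := hv0
  have hj0' : 0 < v j0 := (hv j0).lt_of_ne (Ne.symm hj0)
  have h1 : Q i j0 * v j0 ≤ ∑ j, Q i j * v j :=
    Finset.single_le_sum (fun j _ => mul_nonneg (hQ i j).le (hv j)) (Finset.mem_univ j0)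
  calc (0:ℝ) < Q i j0 * v j0 := mul_pos (hQ i j0) hj0'
    _ ≤ ∑ j, Q i j * v j := h1
    _ = Q.mulVec v i := rfl

lemma map_pow' (M : Matrix ι ι ℝ) (k : ℕ) :
    (M.map (Complex.ofReal ·)) ^ k = (M ^ k).map (Complex.ofReal ·) := by
  have : M.map (Complex.ofReal ·) = M.map Complex.ofRealHom := rfl
  induction k with
  | zero => simp [Matrix.map_one]
  | succ k ih =>
    rw [pow_succ, pow_succ, ih, this]
    rw [show (M ^ k).map (Complex.ofReal ·) = (M ^ k).map Complex.ofRealHom from rfl,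
      ← Matrix.map_mul]
    rfl

lemma map_mulVec (M : Matrix ι ι ℝ) (w : ι → ℝ) (i : ι) :
    (M.map (Complex.ofReal ·)).mulVec (fun j => (w j : ℂ)) i = ((M.mulVec w i : ℝ) : ℂ) := by
  simp only [Matrix.mulVec, dotProduct, Matrix.map_apply]
  push_cast
  rfl

lemma specRad_ge [Nonempty ι] (Q : Matrix ι ι ℝ) (hQ : ∀ i j, 0 ≤ Q i j)
    (w : ι → ℝ) (hw : ∀ i, 0 < w i) (s : ℝ) (hs : 0 < s)
    (hsw : ∀ i, s * w i ≤ Q.mulVec w i) : s ≤ specRad Q := by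
  by_contra hcon
  push_neg at hcon
  set Q' := Q.map (Complex.ofReal ·) with hQ'def
  -- iteration
  have hiter : ∀ k : ℕ, ∀ i, s ^ k * w i ≤ (Q ^ k).mulVec w i := by
    intro k
    induction k with
    | zero => intro i; simp [Matrix.one_mulVec]
    | succ k ih =>
      intro i
      have h1 : (Q ^ (k+1)).mulVec w i = Q.mulVec ((Q ^ k).mulVec w) i := by
        rw [Matrix.mulVec_mulVec, ← pow_succ']
      have h2 : Q.mulVec (s ^ k • w) = s ^ k • Q.mulVec w := Matrix.mulVec_smul _ _ _
      have h3 : Q.mulVec (s ^ k • w) i ≤ Q.mulVec ((Q ^ k).mulVec w) i := by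
        refine mulVec_le_mulVec hQ (fun j => ?_) i
        simpa using ih j
      have h4 : s ^ (k+1) * w i ≤ s ^ k * Q.mulVec w i := by
        have := mul_le_mul_of_nonneg_left (hsw i) (pow_nonneg hs.le k)
        calc s ^ (k+1) * w i = s ^ k * (s * w i) := by ring
          _ ≤ s ^ k * Q.mulVec w i := this
      calc s ^ (k+1) * w i ≤ s ^ k * Q.mulVec w i := h4
        _ = Q.mulVec (s ^ k • w) i := by rw [h2]; rfl
        _ ≤ Q.mulVec ((Q ^ k).mulVec w) i := h3
        _ = (Q ^ (k+1)).mulVec w i := h1.symm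
  obtain ⟨i0⟩ := ‹Nonempty ι›
  set v : ι → ℂ := fun j => (w j : ℂ) with hvdef
  have hvnorm : 0 < ‖v‖ := by
    have h1 : ‖v i0‖ ≤ ‖v‖ := norm_le_pi_norm v i0
    have h2 : ‖v i0‖ = w i0 := by
      simp [hvdef, Complex.norm_real, abs_of_pos (hw i0)]
    linarith [hw i0]
  have hkey : ∀ k : ℕ, s ^ k * w i0 ≤ ‖Q' ^ k‖ * ‖v‖ := by
    intro k
    have h1 : (Q' ^ k).mulVec v i0 = (((Q ^ k).mulVec w i0 : ℝ) : ℂ) := by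
      rw [hQ'def, map_pow']
      exact map_mulVec _ _ _
    have h2 : ‖(Q' ^ k).mulVec v i0‖ = (Q ^ k).mulVec w i0 := by
      rw [h1, Complex.norm_real, Real.norm_of_nonneg]
      exact le_trans (mul_nonneg (pow_nonneg hs.le k) (hw i0).le) (hiter k i0)
    calc s ^ k * w i0 ≤ (Q ^ k).mulVec w i0 := hiter k i0
      _ = ‖(Q' ^ k).mulVec v i0‖ := h2.symm
      _ ≤ ‖(Q' ^ k).mulVec v‖ := norm_le_pi_norm _ i0
      _ ≤ ‖Q' ^ k‖ * ‖v‖ := Matrix.linfty_opNorm_mulVec _ _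
  -- spectralRadius upper bound
  have hub : spectralRadius ℂ Q' ≤ ENNReal.ofReal (specRad Q) := by
    refine iSup₂_le fun μ hμ => ?_
    rw [← enorm_eq_nnnorm, ← ofReal_norm]
    refine ENNReal.ofReal_le_ofReal ?_
    exact abs_le_specRad ((isEigCx_iff Q μ).mpr hμ)
  set s' : ℝ := (specRad Q + s)/2 with hs'def
  have hr0 : 0 ≤ specRad Q := specRad_nonneg Q
  have hs'pos : 0 < s' := by simp [hs'def]; linarith
  have hs's : s' < s := by simp [hs'def]; linarith
  have hlt : spectralRadius ℂ Q' < ENNReal.ofReal s' :=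
    lt_of_le_of_lt hub (by rw [ENNReal.ofReal_lt_ofReal_iff hs'pos]; simp [hs'def]; linarith)
  have hg := spectrum.pow_nnnorm_pow_one_div_tendsto_nhds_spectralRadius Q'
  have hev : ∀ᶠ k : ℕ in atTop, (‖Q' ^ k‖₊ : ℝ≥0∞) ^ (1/(k:ℝ)) < ENNReal.ofReal s' :=
    hg.eventually_lt_const hlt
  have hratio : Tendsto (fun k : ℕ => (s/s') ^ k) atTop atTop :=
    tendsto_pow_atTop_atTop_of_one_lt (by rw [lt_div_iff₀ hs'pos]; linarith)
  have hev2 : ∀ᶠ k : ℕ in atTop, ‖v‖ / w i0 < (s/s') ^ k :=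
    hratio.eventually_gt_atTop _
  obtain ⟨k, hk1, hk2, hk3⟩ := ((eventually_ge_atTop 1).and (hev.and hev2)).exists
  obtain ⟨hk2, hk3⟩ := And.intro hk2 hk3
  have hkpos : (0:ℝ) < (k:ℝ) := by exact_mod_cast hk1
  have h5 : (‖Q' ^ k‖₊ : ℝ≥0∞) < ENNReal.ofReal (s' ^ k) := by
    have h6 := ENNReal.rpow_lt_rpow hk2 hkpos
    rw [← ENNReal.rpow_mul, one_div, inv_mul_cancel₀ (ne_of_gt hkpos), ENNReal.rpow_one] at h6
    rwa [ENNReal.ofReal_rpow_of_pos hs'pos, Real.rpow_natCast] at h6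
  have hnorm : ‖Q' ^ k‖ < s' ^ k := by
    rw [← enorm_eq_nnnorm, ← ofReal_norm] at h5
    exact (ENNReal.ofReal_lt_ofReal_iff_of_nonneg (norm_nonneg _)).mp h5
  have h7 : ‖v‖ * s' ^ k < s ^ k * w i0 := by
    rw [div_pow] at hk3
    rw [div_lt_div_iff₀ (hw i0) (pow_pos hs'pos k)] at hk3
    linarith
  have h8 : s ^ k * w i0 < s' ^ k * ‖v‖ :=
    lt_of_le_of_lt (hkey k) (mul_lt_mul_of_pos_right hnorm hvnorm)
  linarith [h7, h8, mul_comm (‖v‖) (s' ^ k)]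


lemma re_eq_abs_imp {z : ℂ} (h : z.re = ‖z‖) : z = ((‖z‖ : ℝ) : ℂ) := by
  have h2 : ‖z‖ ^ 2 = z.re ^ 2 + z.im ^ 2 := by
    rw [Complex.sq_norm, Complex.normSq_apply]; ring
  have h3 : z.im ^ 2 = 0 := by rw [h] at h2; linarith
  have him : z.im = 0 := by
    exact pow_eq_zero_iff (by norm_num : (2:ℕ) ≠ 0) |>.mp h3
  apply Complex.ext
  · simp [h]
  · simp [him]

lemma pf_core [Nonempty ι] (P : Matrix ι ι ℝ) (hP : ∀ i j, 0 ≤ P i j) (m : ℕ) (hm : 0 < m)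
    (hprim : ∀ i j, 0 < (P ^ m) i j) {μ : ℂ} (hμ : IsEigCx P μ)
    (habs : ‖μ‖ = specRad P) : μ = (specRad P : ℂ) := by
  set r := specRad P with hrdef
  set P' := P.map (Complex.ofReal ·) with hP'def
  have hr0 : 0 ≤ r := habs ▸ norm_nonneg μ
  obtain ⟨x, hx0, hxe⟩ : ∃ x, x ≠ 0 ∧ (μ • (1 : Matrix ι ι ℂ) - P').mulVec x = 0 := by
    obtain ⟨x, hx0, hx⟩ :=
      (Matrix.exists_mulVec_eq_zero_iff (M := μ • (1 : Matrix ι ι ℂ) - P')).mpr hμ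
    exact ⟨x, hx0, hx⟩
  have hxeig : P'.mulVec x = μ • x := by
    have h1 : (μ • (1 : Matrix ι ι ℂ)).mulVec x - P'.mulVec x = 0 := by
      rw [← Matrix.sub_mulVec]; exact hxe
    have h2 : (μ • (1 : Matrix ι ι ℂ)).mulVec x = μ • x := by
      rw [Matrix.smul_mulVec, Matrix.one_mulVec]
    rw [h2] at h1
    exact (sub_eq_zero.mp h1).symm
  set y : ι → ℝ := fun i => ‖x i‖ with hydef
  have hy0 : ∀ i, 0 ≤ y i := fun i => norm_nonneg _
  have hyne : ∃ i, y i ≠ 0 := by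
    by_contra h; push_neg at h
    exact hx0 (funext fun i => by simpa [hydef] using h i)
  have hpow : ∀ k : ℕ, (P' ^ k).mulVec x = (μ ^ k) • x := by
    intro k; induction k with
    | zero => simp [Matrix.one_mulVec]
    | succ k ih =>
      rw [pow_succ', ← Matrix.mulVec_mulVec, ih, Matrix.mulVec_smul, hxeig, smul_smul, ← pow_succ]
  have htri : ∀ (k : ℕ) (i : ι), r ^ k * y i ≤ (P ^ k).mulVec y i := by
    intro k i
    have h2 : (μ ^ k) * x i = (P' ^ k).mulVec x i := by rw [hpow k]; rfl
    have h1 : r ^ k * y i = ‖(P' ^ k).mulVec x i‖ := by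
      rw [← h2, norm_mul, norm_pow, habs, hydef]
    rw [h1, hP'def, map_pow']
    have h3 : ((P ^ k).map (Complex.ofReal ·)).mulVec x i
        = ∑ j, ((((P ^ k) i j : ℝ)) : ℂ) * x j := rfl
    rw [h3]
    refine le_trans (norm_sum_le _ _) ?_
    refine le_of_eq (Finset.sum_congr rfl fun j _ => ?_)
    rw [norm_mul, Complex.norm_real, Real.norm_of_nonneg (pow_entry_nonneg hP k i j)]
  have hiter1 : ∀ i, r * y i ≤ P.mulVec y i := by
    intro i; have := htri 1 i; simpa using this
  have heq : ∀ i, P.mulVec y i = r * y i := by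
    by_contra hne
    push_neg at hne; obtain ⟨i1, hne⟩ := hne
    set z : ι → ℝ := fun i => P.mulVec y i - r * y i with hzdef
    have hz0 : ∀ i, 0 ≤ z i := fun i => sub_nonneg.mpr (hiter1 i)
    have hzne : ∃ i, z i ≠ 0 := ⟨i1, sub_ne_zero.mpr hne⟩
    set w : ι → ℝ := (P ^ m).mulVec y with hwdef
    have hwpos : ∀ i, 0 < w i := fun i => mulVec_pos hprim hy0 hyne i
    have hzpos : ∀ i, 0 < (P ^ m).mulVec z i := fun i => mulVec_pos hprim hz0 hzne i
    have hPy : P.mulVec y = (r • y) + z := by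
      funext i; simp [hzdef, Pi.add_apply, Pi.smul_apply, smul_eq_mul]
    have hgap : ∀ i, P.mulVec w i = r * w i + (P ^ m).mulVec z i := by
      intro i
      have h1 : P.mulVec w = (P ^ m).mulVec (P.mulVec y) := by
        rw [hwdef, Matrix.mulVec_mulVec, Matrix.mulVec_mulVec, ← pow_succ, ← pow_succ']
      rw [h1, hPy, Matrix.mulVec_add, Matrix.mulVec_smul]
      simp [hwdef, smul_eq_mul]
    have hne' : Finset.univ.Nonempty (α := ι) := Finset.univ_nonempty
    set ε := Finset.univ.inf' hne' (fun i => ((P ^ m).mulVec z i) / w i) with hεdef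
    have hεpos : 0 < ε := by
      rw [hεdef, Finset.lt_inf'_iff]
      exact fun i _ => div_pos (hzpos i) (hwpos i)
    have hsw : ∀ i, (r + ε) * w i ≤ P.mulVec w i := by
      intro i
      have h1 : ε ≤ (P ^ m).mulVec z i / w i := Finset.inf'_le _ (Finset.mem_univ i)
      have h2 : ε * w i ≤ (P ^ m).mulVec z i := by
        rw [← le_div_iff₀ (hwpos i)]; exact h1
      rw [hgap i]; nlinarith
    have hle := specRad_ge P hP w hwpos (r + ε) (by linarith) hsw
    rw [← hrdef] at hle
    linarith
  have hpowy : ∀ k : ℕ, (P ^ k).mulVec y = (r ^ k) • y := by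
    intro k; induction k with
    | zero => simp [Matrix.one_mulVec]
    | succ k ih =>
      have h1 : (P ^ (k+1)).mulVec y = (P ^ k).mulVec (P.mulVec y) := by
        rw [Matrix.mulVec_mulVec, ← pow_succ]
      have h2 : P.mulVec y = r • y := funext fun i => by rw [heq i]; rfl
      rw [h1, h2, Matrix.mulVec_smul, ih, smul_smul, ← pow_succ']
  have hym : ∀ i, 0 < r ^ m * y i := by
    intro i
    have := mulVec_pos hprim hy0 hyne i
    rwa [show ((P ^ m).mulVec y) i = (r ^ m • y) i from by rw [hpowy m], Pi.smul_apply,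
      smul_eq_mul] at this
  have hrpos : 0 < r := by
    rcases hr0.lt_or_eq with h | h
    · exact h
    · exfalso
      obtain ⟨i⟩ := ‹Nonempty ι›
      have := hym i
      rw [← h, zero_pow hm.ne'] at this
      linarith
  have hypos : ∀ i, 0 < y i := by
    intro i
    have h1 := hym i
    have h2 : 0 < r ^ m := pow_pos hrpos m
    nlinarith [hy0 i]
  obtain ⟨i0⟩ := ‹Nonempty ι›
  set c : ι → ℝ := fun j => (P ^ m) i0 j with hcdef
  have hcpos : ∀ j, 0 < c j := fun j => hprim i0 j
  set S : ℂ := ∑ j, ((c j : ℝ) : ℂ) * x j with hSdef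
  have hSx : S = (μ ^ m) * x i0 := by
    have h1 : (P' ^ m).mulVec x i0 = (μ ^ m) * x i0 := by rw [hpow m]; rfl
    rw [← h1, hP'def, map_pow']
    rfl
  have habsS : ‖S‖ = ∑ j, c j * y j := by
    have h1 : ‖S‖ = r ^ m * y i0 := by
      rw [hSx, norm_mul, norm_pow, habs, hydef]
    have h2 : ((P ^ m).mulVec y) i0 = ∑ j, c j * y j := rfl
    rw [h1, ← h2, hpowy m]
    rfl
  have hSsum_pos : 0 < ∑ j, c j * y j :=
    calc (0:ℝ) < c i0 * y i0 := mul_pos (hcpos i0) (hypos i0)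
      _ ≤ ∑ j, c j * y j :=
        Finset.single_le_sum (fun j _ => mul_nonneg (hcpos j).le (hy0 j)) (Finset.mem_univ i0)
  have hSpos : 0 < ‖S‖ := by rw [habsS]; exact hSsum_pos
  set u : ℂ := S / ((‖S‖ : ℝ) : ℂ) with hudef
  have huabs : ‖u‖ = 1 := by
    rw [hudef, norm_div, Complex.norm_real, Real.norm_of_nonneg hSpos.le, div_self hSpos.ne']
  have hu0 : u ≠ 0 := by
    intro h; rw [h] at huabs; simp at huabs
  have hconjuS : (starRingEnd ℂ) u * S = ((‖S‖ : ℝ) : ℂ) := by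
    rw [hudef, map_div₀, Complex.conj_ofReal, div_mul_eq_mul_div, mul_comm, Complex.mul_conj,
      Complex.normSq_eq_norm_sq]
    rw [div_eq_iff (by exact_mod_cast hSpos.ne' : ((‖S‖ : ℝ) : ℂ) ≠ 0)]
    push_cast
    ring
  have hreS : ((starRingEnd ℂ) u * S).re = ‖S‖ := by
    rw [hconjuS, Complex.ofReal_re]
  have hre : ∀ j, ((starRingEnd ℂ) u * x j).re ≤ y j := by
    intro j
    refine le_trans (Complex.re_le_norm _) ?_
    rw [norm_mul, Complex.norm_conj, huabs, one_mul]
  have hsum1 : ∑ j, c j * ((starRingEnd ℂ) u * x j).re = ‖S‖ := by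
    calc ∑ j, c j * ((starRingEnd ℂ) u * x j).re
        = (∑ j, ((c j : ℝ) : ℂ) * ((starRingEnd ℂ) u * x j)).re := by
          rw [Complex.re_sum]
          exact Finset.sum_congr rfl fun j _ => by simp [Complex.mul_re]
      _ = ((starRingEnd ℂ) u * S).re := by
          rw [hSdef, Finset.mul_sum]
          congr 1
          exact Finset.sum_congr rfl fun j _ => by ring
      _ = ‖S‖ := hreS
  have hsum0 : ∑ j, c j * (y j - ((starRingEnd ℂ) u * x j).re) = 0 := by
    have : ∑ j, c j * (y j - ((starRingEnd ℂ) u * x j).re)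
        = (∑ j, c j * y j) - ∑ j, c j * ((starRingEnd ℂ) u * x j).re := by
      rw [← Finset.sum_sub_distrib]
      exact Finset.sum_congr rfl fun j _ => by ring
    rw [this, hsum1, habsS, sub_self]
  have hall := (Finset.sum_eq_zero_iff_of_nonneg
    (fun j _ => mul_nonneg (hcpos j).le (sub_nonneg.mpr (hre j)))).mp hsum0
  have hterm : ∀ j, (starRingEnd ℂ) u * x j = ((y j : ℝ) : ℂ) := by
    intro j
    have h2 : ((starRingEnd ℂ) u * x j).re = y j := by
      have h3 := hall j (Finset.mem_univ j)
      have h4 := (mul_eq_zero.mp h3).resolve_left (hcpos j).ne'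
      linarith [sub_eq_zero.mp h4]
    have h4 : ‖(starRingEnd ℂ) u * x j‖ = y j := by
      rw [norm_mul, Complex.norm_conj, huabs, one_mul]
    have h5 := re_eq_abs_imp (h2.trans h4.symm)
    rw [h5, h4]
  have hxu : ∀ j, x j = ((y j : ℝ) : ℂ) * u := by
    intro j
    have h2 : u * ((starRingEnd ℂ) u * x j) = u * ((y j : ℝ) : ℂ) := by rw [hterm j]
    rw [← mul_assoc, Complex.mul_conj, Complex.normSq_eq_norm_sq, huabs] at h2
    rw [mul_comm] at h2
    simpa [mul_comm] using h2
  have hfin : P'.mulVec x i0 = μ * x i0 := by rw [hxeig]; rfl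
  have hL : P'.mulVec x i0 = ((r * y i0 : ℝ) : ℂ) * u := by
    have h1 : P'.mulVec x i0 = ∑ j, ((P i0 j : ℝ) : ℂ) * x j := rfl
    rw [h1]
    calc ∑ j, ((P i0 j : ℝ):ℂ) * x j = ∑ j, (((P i0 j * y j : ℝ)) : ℂ) * u := by
          refine Finset.sum_congr rfl fun j _ => ?_
          rw [hxu j]; push_cast; ring
      _ = ((∑ j, P i0 j * y j : ℝ) : ℂ) * u := by rw [← Finset.sum_mul]; norm_cast
      _ = ((r * y i0 : ℝ) : ℂ) * u := by
          rw [show ∑ j, P i0 j * y j = P.mulVec y i0 from rfl, heq i0]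
  have h5 : (r : ℂ) * (((y i0 : ℝ) : ℂ) * u) = μ * (((y i0 : ℝ) : ℂ) * u) := by
    have h6 : ((r * y i0 : ℝ) : ℂ) * u = μ * x i0 := hL.symm.trans hfin
    rw [hxu i0] at h6
    push_cast at h6 ⊢
    linear_combination h6
  have hyu0 : ((y i0 : ℝ) : ℂ) * u ≠ 0 :=
    mul_ne_zero (by exact_mod_cast (hypos i0).ne') hu0
  have h7 : (r : ℂ) = μ := mul_right_cancel₀ hyu0 h5
  exact h7.symm
end PFAux

lemma eig_block {n : ℕ} (A : Matrix (Fin n) (Fin n) ℝ) (C : Finset (Fin n))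
    (hclosed : ∀ i ∈ C, ∀ j, j ∉ C → A i j = 0) (μ : ℂ) :
    IsEigCx A μ ↔ IsEigCx (principalSub A C) μ ∨ IsEigCx (principalSub A Cᶜ) μ := by
  classical
  let e2 : {i : Fin n // i ∈ Cᶜ} ≃ {i : Fin n // ¬ i ∈ C} :=
    Equiv.subtypeEquivRight fun i => Finset.mem_compl
  let E : {i // i ∈ C} ⊕ {i : Fin n // i ∈ Cᶜ} ≃ Fin n :=
    (Equiv.sumCongr (Equiv.refl _) e2).trans (Equiv.sumCompl (· ∈ C))
  set M : Matrix (Fin n) (Fin n) ℂ :=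
    μ • (1 : Matrix (Fin n) (Fin n) ℂ) - A.map (Complex.ofReal ·) with hM
  set B11 : Matrix {i // i ∈ C} {i // i ∈ C} ℂ :=
    μ • (1 : Matrix {i // i ∈ C} {i // i ∈ C} ℂ) - (principalSub A C).map (Complex.ofReal ·)
    with hB11
  set B22 : Matrix {i : Fin n // i ∈ Cᶜ} {i : Fin n // i ∈ Cᶜ} ℂ :=
    μ • (1 : Matrix {i : Fin n // i ∈ Cᶜ} {i : Fin n // i ∈ Cᶜ} ℂ)
      - (principalSub A Cᶜ).map (Complex.ofReal ·) with hB22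
  set B21 : Matrix {i : Fin n // i ∈ Cᶜ} {i // i ∈ C} ℂ :=
    (fun i j => -((A i.1 j.1 : ℝ) : ℂ)) with hB21
  have hEl : ∀ a : {i // i ∈ C}, E (Sum.inl a) = a.1 := fun a => rfl
  have hEr : ∀ a : {i : Fin n // i ∈ Cᶜ}, E (Sum.inr a) = a.1 := fun a => rfl
  have hsub : M.submatrix E E = Matrix.fromBlocks B11 0 B21 B22 := by
    ext a b
    rcases a with a | a <;> rcases b with b | b
    · have h1 : E (Sum.inl a) = a.1 := by first | exact hEl _ | exact hEr _
      have h2 : E (Sum.inl b) = b.1 := by first | exact hEl _ | exact hEr _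
      simp only [Matrix.submatrix_apply, h1, h2, hM, Matrix.sub_apply, Matrix.smul_apply,
        Matrix.one_apply, Matrix.map_apply, Matrix.fromBlocks_apply₁₁, hB11, principalSub,
        smul_eq_mul]
      congr 1
      congr 1
      simp [Subtype.val_inj]
    · have h1 : E (Sum.inl a) = a.1 := by first | exact hEl _ | exact hEr _
      have h2 : E (Sum.inr b) = b.1 := by first | exact hEl _ | exact hEr _
      have hne : a.1 ≠ b.1 := by
        intro h
        exact (Finset.mem_compl.mp b.2) (h ▸ a.2)
      have hz : A a.1 b.1 = 0 := hclosed a.1 a.2 b.1 (Finset.mem_compl.mp b.2)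
      simp [Matrix.submatrix_apply, h1, h2, hM, Matrix.one_apply, hne, hz]
    · have h1 : E (Sum.inr a) = a.1 := by first | exact hEl _ | exact hEr _
      have h2 : E (Sum.inl b) = b.1 := by first | exact hEl _ | exact hEr _
      have hne : a.1 ≠ b.1 := by
        intro h
        exact (Finset.mem_compl.mp a.2) (h ▸ b.2)
      simp [Matrix.submatrix_apply, h1, h2, hM, Matrix.one_apply, hne, hB21]
      rfl
    · have h1 : E (Sum.inr a) = a.1 := by first | exact hEl _ | exact hEr _
      have h2 : E (Sum.inr b) = b.1 := by first | exact hEl _ | exact hEr _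
      simp only [Matrix.submatrix_apply, h1, h2, hM, Matrix.sub_apply, Matrix.smul_apply,
        Matrix.one_apply, Matrix.map_apply, Matrix.fromBlocks_apply₂₂, hB22, principalSub,
        smul_eq_mul]
      congr 1
      congr 1
      simp [Subtype.val_inj]
  have hdet : M.det = B11.det * B22.det := by
    rw [← Matrix.det_submatrix_equiv_self E M, hsub, Matrix.det_fromBlocks_zero₁₂]
  constructor
  · intro h
    have h' : M.det = 0 := h
    rw [hdet] at h'
    exact (mul_eq_zero.mp h').imp (fun h => h) (fun h => h)
  · intro h
    show M.det = 0
    rw [hdet]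
    rcases h with h' | h'
    · rw [show B11.det = 0 from h', zero_mul]
    · rw [show B22.det = 0 from h', mul_zero]


/-- If a nonnegative matrix `A` has a unique final class `C` which is primitive
(some power of the principal submatrix `A_C` is entrywise positive), and
`ρ(A_C) > ρ(A_{Cᶜ})`, then every complex eigenvalue of `A` other than `ρ(A)` has
absolute value strictly less than `ρ(A)`. -/
theorem nonneg_matrix_primitive_spectral_gap (n : ℕ)
    (A : Matrix (Fin n) (Fin n) ℝ) (hA : ∀ i j, 0 ≤ A i j)
    (C : Finset (Fin n)) (hC : IsFinalClass A C)
    (hC_unique : ∀ C' : Finset (Fin n), IsFinalClass A C' → C' = C)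
    (hC_prim : ∃ m : ℕ, 0 < m ∧ ∀ i j, 0 < ((principalSub A C) ^ m) i j)
    (hgap : specRad (principalSub A Cᶜ) < specRad (principalSub A C)) :
    ∀ μ : ℂ, IsEigCx A μ → μ ≠ (specRad A : ℂ) → ‖μ‖ < specRad A := by
  intro μ hμ hne
  obtain ⟨hCne, _, hCclosed⟩ := hC
  have hclosed : ∀ i ∈ C, ∀ j, j ∉ C → A i j = 0 := by
    intro i hi j hj
    rcases (hA i j).lt_or_eq with h | h
    · exact absurd (hCclosed i hi j h) hj
    · exact h.symm
  haveI : Nonempty {i // i ∈ C} := ⟨⟨hCne.choose, hCne.choose_spec⟩⟩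
  obtain ⟨m, hm, hprim⟩ := hC_prim
  have hPnn : ∀ i j, 0 ≤ (principalSub A C) i j := fun i j => hA i.1 j.1
  obtain ⟨μ0, hμ0, hμ0abs⟩ := PFAux.exists_eig_max (principalSub A C)
  have hAr : specRad A = specRad (principalSub A C) := by
    have hgr : IsGreatest ((fun z : ℂ => ‖z‖) '' {ν | IsEigCx A ν}) (specRad (principalSub A C)) := by
      constructor
      · exact ⟨μ0, (eig_block A C hclosed μ0).mpr (Or.inl hμ0), hμ0abs⟩
      · rintro a ⟨ν, hν, rfl⟩
        rcases (eig_block A C hclosed ν).mp hν with h | h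
        · exact PFAux.abs_le_specRad h
        · exact le_trans (PFAux.abs_le_specRad h) hgap.le
    exact hgr.csSup_eq
  rw [hAr] at hne ⊢
  rcases (eig_block A C hclosed μ).mp hμ with h | h
  · rcases (PFAux.abs_le_specRad h).lt_or_eq with hlt | heq
    · exact hlt
    · exact absurd (PFAux.pf_core (principalSub A C) hPnn m hm hprim h heq) hne
  · exact lt_of_le_of_lt (PFAux.abs_le_specRad h) hgap
end
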